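/- arXiv:1501.00423 — 4 statements merged into one kernel-verified Lean document; each statement's English description precedes it below -/
import Mathlib

section
/- Let Ω ⊂ ℝⁿ be a bounded connected open set whose signed distance function d is C² on a neighborhood of ∂Ω. Assume condition (reg22) (uniform continuity of b), condition (reg2) (β-Hölder continuity of σ with β ∈ (1/2,1]), condition (irrelevant), and that the operator F satisfies the Strong Maximum Principle in Ω (every upper semicontinuous viscosity subsolution of F[u]=0 attaining its maximum over Ω at an interior point is constant). If u : Ω → ℝ is upper semicontinuous, is a viscosity subsolution of F[u]=0 in Ω, and satisfies limsup_{x→∂Ω} u(x)/(−log d(x)) ≤ 0, then u is constant. -/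
open scoped InnerProductSpace Matrix
open Filter

noncomputable section

/-- The signed distance to the boundary of `Ω`:
`d(x) = dist(x, Ωᶜ) - dist(x, closure Ω)`. -/
def sdist {n : ℕ} (Ω : Set (EuclideanSpace ℝ (Fin n))) (x : EuclideanSpace ℝ (Fin n)) : ℝ :=
  Metric.infDist x Ωᶜ - Metric.infDist x (closure Ω)

/-- The distance to the topological boundary of `Ω`. -/
def bdist {n : ℕ} (Ω : Set (EuclideanSpace ℝ (Fin n))) (x : EuclideanSpace ℝ (Fin n)) : ℝ :=
  Metric.infDist x (frontier Ω)

/-- The Frobenius (Euclidean) norm of a matrix. -/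
def mnorm {n r : ℕ} (M : Matrix (Fin n) (Fin r) ℝ) : ℝ :=
  Real.sqrt (∑ i, ∑ j, M i j ^ 2)

/-- The quadratic form `v ↦ v ⬝ X v`. -/
def quadForm {n : ℕ} (X : Matrix (Fin n) (Fin n) ℝ) (v : EuclideanSpace ℝ (Fin n)) : ℝ :=
  ∑ i, ∑ j, X i j * v i * v j

/-- `Mᵀ v` as a vector in `ℝʳ` (used for `σ(x,α)ᵀ Dd(x)`). -/
def sigmaT {n r : ℕ} (M : Matrix (Fin n) (Fin r) ℝ) (v : EuclideanSpace ℝ (Fin n)) :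
    Fin r → ℝ :=
  Matrix.mulVec Mᵀ (fun i => v i)

/-- The second-order superjet of `u` at `x` relative to `S`. -/
def J2plus {n : ℕ} (S : Set (EuclideanSpace ℝ (Fin n))) (u : EuclideanSpace ℝ (Fin n) → ℝ)
    (x : EuclideanSpace ℝ (Fin n)) :
    Set (EuclideanSpace ℝ (Fin n) × Matrix (Fin n) (Fin n) ℝ) :=
  { pX | pX.2.IsSymm ∧ ∀ ε > (0 : ℝ), ∀ᶠ y in nhdsWithin x S,
      u y - u x - ⟪pX.1, y - x⟫_ℝ - (1 / 2) * quadForm pX.2 (y - x) ≤ ε * ‖y - x‖ ^ 2 }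

/-- The second-order subjet of `u` at `x` relative to `S`: `J^{2,-}u = -J^{2,+}(-u)`. -/
def J2minus {n : ℕ} (S : Set (EuclideanSpace ℝ (Fin n))) (u : EuclideanSpace ℝ (Fin n) → ℝ)
    (x : EuclideanSpace ℝ (Fin n)) :
    Set (EuclideanSpace ℝ (Fin n) × Matrix (Fin n) (Fin n) ℝ) :=
  { qZ | (-qZ.1, -qZ.2) ∈ J2plus S (fun y => -u y) x }

/-- The first-order superdifferential of `u` at `x` relative to `S`. -/
def D1plus {n : ℕ} (S : Set (EuclideanSpace ℝ (Fin n))) (u : EuclideanSpace ℝ (Fin n) → ℝ)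
    (x : EuclideanSpace ℝ (Fin n)) : Set (EuclideanSpace ℝ (Fin n)) :=
  { q | ∀ ε > (0 : ℝ), ∀ᶠ y in nhdsWithin x S, u y - u x - ⟪q, y - x⟫_ℝ ≤ ε * ‖y - x‖ }

/-- The Bellman operator `F(x,p,X) = sup_{α ∈ A} (-b(x,α)·p - tr(σσᵀ X))`. -/
def Fop {n m r : ℕ} (A : Set (Fin m → ℝ))
    (b : EuclideanSpace ℝ (Fin n) → (Fin m → ℝ) → EuclideanSpace ℝ (Fin n))
    (σ : EuclideanSpace ℝ (Fin n) → (Fin m → ℝ) → Matrix (Fin n) (Fin r) ℝ)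
    (x p : EuclideanSpace ℝ (Fin n)) (X : Matrix (Fin n) (Fin n) ℝ) : ℝ :=
  sSup ((fun α => -⟪b x α, p⟫_ℝ - Matrix.trace (σ x α * (σ x α)ᵀ * X)) '' A)

/-- The Hamiltonian `H(x,p,X) = sup_{α ∈ A} (-b(x,α)·p - tr(σσᵀ X) - l(x,α))`. -/
def Hop {n m r : ℕ} (A : Set (Fin m → ℝ))
    (b : EuclideanSpace ℝ (Fin n) → (Fin m → ℝ) → EuclideanSpace ℝ (Fin n))
    (σ : EuclideanSpace ℝ (Fin n) → (Fin m → ℝ) → Matrix (Fin n) (Fin r) ℝ)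
    (l : EuclideanSpace ℝ (Fin n) → (Fin m → ℝ) → ℝ)
    (x p : EuclideanSpace ℝ (Fin n)) (X : Matrix (Fin n) (Fin n) ℝ) : ℝ :=
  sSup ((fun α => -⟪b x α, p⟫_ℝ - Matrix.trace (σ x α * (σ x α)ᵀ * X) - l x α) '' A)

/-- The set of projections of `x` onto `∂Ω`. -/
def projSet {n : ℕ} (Ω : Set (EuclideanSpace ℝ (Fin n))) (x : EuclideanSpace ℝ (Fin n)) :
    Set (EuclideanSpace ℝ (Fin n)) :=
  { z | z ∈ frontier Ω ∧ dist x z = bdist Ω x }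

/-- The interior normal directions at a boundary point `z`. -/
def normalDirs {n : ℕ} (Ω : Set (EuclideanSpace ℝ (Fin n))) (z : EuclideanSpace ℝ (Fin n)) :
    Set (EuclideanSpace ℝ (Fin n)) :=
  { ν | ‖ν‖ = 1 ∧ ∃ x ∈ Ω, x = z + bdist Ω x • ν }

section SMPHelpers

open Filter Metric

namespace SMPH

variable {n r : ℕ} {Ω : Set (EuclideanSpace ℝ (Fin n))}

lemma sdist_cont : Continuous (sdist Ω) :=
  (Metric.continuous_infDist_pt _).sub (Metric.continuous_infDist_pt _)

lemma sdist_eq_infDist {x : EuclideanSpace ℝ (Fin n)} (hx : x ∈ closure Ω) :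
    sdist Ω x = Metric.infDist x Ωᶜ := by
  simp [sdist, Metric.infDist_zero_of_mem hx]

lemma sdist_le_infDist (x : EuclideanSpace ℝ (Fin n)) :
    sdist Ω x ≤ Metric.infDist x Ωᶜ := by
  have := Metric.infDist_nonneg (s := closure Ω) (x := x)
  simp only [sdist]; linarith

lemma sdist_pos (hΩo : IsOpen Ω) (hc : Ωᶜ.Nonempty) {x : EuclideanSpace ℝ (Fin n)}
    (hx : x ∈ Ω) : 0 < sdist Ω x := by
  rw [sdist_eq_infDist (subset_closure hx)]
  exact (IsClosed.notMem_iff_infDist_pos hΩo.isClosed_compl hc).mp (by simp [hx])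

lemma mem_of_sdist_pos {x : EuclideanSpace ℝ (Fin n)} (h : 0 < sdist Ω x) : x ∈ Ω := by
  by_contra hx
  have h0 : Metric.infDist x Ωᶜ = 0 := Metric.infDist_zero_of_mem hx
  have := sdist_le_infDist (Ω := Ω) x
  linarith

lemma sdist_nonneg_of_mem_closure {x : EuclideanSpace ℝ (Fin n)} (hx : x ∈ closure Ω) :
    0 ≤ sdist Ω x := by
  rw [sdist_eq_infDist hx]; exact Metric.infDist_nonneg

/-- USC functions on compact sets have bounded-above images. -/
lemma usc_bddAbove {E : Type*} [MetricSpace E] {K : Set E} {f : E → ℝ}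
    (hK : IsCompact K) (hf : UpperSemicontinuousOn f K) : BddAbove (f '' K) := by
  by_contra hb
  have hseq : ∀ j : ℕ, ∃ y ∈ K, (j : ℝ) < f y := by
    intro j
    rcases not_bddAbove_iff.mp hb (j : ℝ) with ⟨-, ⟨y, hy, rfl⟩, hyj⟩
    exact ⟨y, hy, hyj⟩
  choose y hyK hyf using hseq
  obtain ⟨xh, hxhK, φ, hφ, hconv⟩ := hK.tendsto_subseq hyK
  have hconv' : Tendsto (y ∘ φ) atTop (nhdsWithin xh K) :=
    tendsto_nhdsWithin_of_tendsto_nhds_of_eventually_within _ hconv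
      (Eventually.of_forall fun j => hyK (φ j))
  have h1 : ∀ᶠ j in atTop, f (y (φ j)) < f xh + 1 :=
    hconv' (hf xh hxhK (f xh + 1) (lt_add_one _))
  have h2 : ∀ᶠ j in atTop, f xh + 1 < f (y (φ j)) := by
    filter_upwards [eventually_gt_atTop ⌈f xh + 1⌉₊] with j hj
    calc f xh + 1 ≤ (⌈f xh + 1⌉₊ : ℝ) := Nat.le_ceil _
    _ ≤ (j : ℝ) := by exact_mod_cast hj.le
    _ ≤ (φ j : ℝ) := by exact_mod_cast hφ.id_le j
    _ < f (y (φ j)) := hyf _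
  rcases (h1.and h2).exists with ⟨j, hj1, hj2⟩
  linarith

/-- USC functions attain their max on nonempty compact sets. -/
lemma usc_exists_max {E : Type*} [MetricSpace E] {K : Set E} {f : E → ℝ}
    (hK : IsCompact K) (hne : K.Nonempty) (hf : UpperSemicontinuousOn f K) :
    ∃ x₀ ∈ K, ∀ y ∈ K, f y ≤ f x₀ := by
  have hbdd := usc_bddAbove hK hf
  have hnim : (f '' K).Nonempty := hne.image f
  set M := sSup (f '' K) with hM
  obtain ⟨t, -, htM, htmem⟩ := exists_seq_tendsto_sSup hnim hbdd
  have hsel : ∀ j, ∃ y ∈ K, f y = t j := fun j => htmem j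
  choose y hyK hyf using hsel
  obtain ⟨x₀, hx₀K, φ, hφ, hconv⟩ := hK.tendsto_subseq hyK
  refine ⟨x₀, hx₀K, fun z hz => le_trans (le_csSup hbdd ⟨z, hz, rfl⟩) ?_⟩
  by_contra hlt
  push_neg at hlt
  have hconv' : Tendsto (y ∘ φ) atTop (nhdsWithin x₀ K) :=
    tendsto_nhdsWithin_of_tendsto_nhds_of_eventually_within _ hconv
      (Eventually.of_forall fun j => hyK (φ j))
  set c := (f x₀ + M) / 2 with hc
  have h1 : ∀ᶠ j in atTop, f (y (φ j)) < c :=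
    hconv' (hf x₀ hx₀K c (by rw [hc]; linarith))
  have htM' : Tendsto (fun j => f (y (φ j))) atTop (nhds M) := by
    have heq : (fun j => f (y (φ j))) = t ∘ φ := by
      funext j; exact hyf (φ j)
    rw [heq]
    exact htM.comp hφ.tendsto_atTop
  have h2 : ∀ᶠ j in atTop, c < f (y (φ j)) :=
    htM'.eventually (eventually_gt_nhds (by rw [hc]; linarith))
  rcases (h1.and h2).exists with ⟨j, hj1, hj2⟩
  linarith

lemma toDual_eq_innerSL {E : Type*} [NormedAddCommGroup E] [InnerProductSpace ℝ E]
    [CompleteSpace E] (g : E) :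
    (InnerProductSpace.toDual ℝ E) g = innerSL ℝ g := by
  ext y; simp [InnerProductSpace.toDual_apply_apply]

/-- Second-order Taylor upper bound from pointwise second differentiability. -/
lemma taylor2 {E : Type*} [NormedAddCommGroup E] [InnerProductSpace ℝ E] [CompleteSpace E]
    {f : E → ℝ} {f' : E → E} {L : E →L[ℝ] E} {x : E}
    (h1 : ∀ᶠ y in nhds x, HasGradientAt f (f' y) y) (h2 : HasFDerivAt f' L x) :
    ∀ ε > (0:ℝ), ∀ᶠ y in nhds x,
      |f y - f x - ⟪f' x, y - x⟫_ℝ - (1/2) * ⟪L (y - x), y - x⟫_ℝ| ≤ ε * ‖y - x‖^2 := by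
  have h1' : ∀ᶠ y in nhds x, HasFDerivAt f (innerSL ℝ (f' y)) y := by
    filter_upwards [h1] with y hy
    have h := hy.hasFDerivAt
    rwa [toDual_eq_innerSL] at h
  have h2' : HasFDerivAt (fun y => innerSL ℝ (f' y)) ((innerSL ℝ).comp L) x :=
    (innerSL ℝ).hasFDerivAt.comp x h2
  have hsym : ∀ v w : E, ⟪L v, w⟫_ℝ = ⟪L w, v⟫_ℝ := by
    intro v w
    have h := second_derivative_symmetric_of_eventually h1' h2' v w
    simpa using h
  intro ε hε
  have hlo : ∀ᶠ y in nhds x, ‖f' y - f' x - L (y - x)‖ ≤ ε * ‖y - x‖ :=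
    h2.isLittleO.def hε
  rcases Metric.mem_nhds_iff.mp (h1.and hlo) with ⟨r, hr, hball⟩
  rw [Metric.eventually_nhds_iff_ball]
  refine ⟨r, hr, fun y hy => ?_⟩
  set g : E → ℝ := fun w =>
    f w - f x - ⟪f' x, w - x⟫_ℝ - (1/2) * ⟪L (w - x), w - x⟫_ℝ with hg
  have hgd : ∀ w ∈ ball x r,
      HasFDerivAt g (innerSL ℝ (f' w - f' x - L (w - x))) w := by
    intro w hw
    have hfw : HasFDerivAt f (innerSL ℝ (f' w)) w := by
      have h := (hball hw).1.hasFDerivAt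
      rwa [toDual_eq_innerSL] at h
    have hT1 : HasFDerivAt (fun w => ⟪f' x, w - x⟫_ℝ) (innerSL ℝ (f' x)) w := by
      have h := ((innerSL ℝ (f' x)).hasFDerivAt (x := w)).sub_const
        ((innerSL ℝ (f' x)) x)
      have heq : (fun w => ⟪f' x, w - x⟫_ℝ)
          = fun w => (innerSL ℝ (f' x)) w - (innerSL ℝ (f' x)) x := by
        funext z; simp [inner_sub_right]
      rw [heq]
      simpa using h
    have hA : HasFDerivAt (fun w : E => L (w - x)) (L : E →L[ℝ] E) w := by
      have heq : (fun w : E => L (w - x)) = fun w => L w - L x := by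
        funext z; simp
      rw [heq]
      simpa using (L.hasFDerivAt (x := w)).sub_const (L x)
    have hB : HasFDerivAt (fun w : E => w - x) (ContinuousLinearMap.id ℝ E) w := by
      simpa using (hasFDerivAt_id w).sub_const x
    have hq := (hA.inner ℝ hB :)
    have htot := ((hfw.sub_const (f x)).sub hT1).sub (hq.const_mul (1/2))
    have hfun : g = fun w =>
        f w - f x - ⟪f' x, w - x⟫_ℝ - (1/2) * ⟪L (w - x), w - x⟫_ℝ := rfl
    rw [hfun]
    refine htot.congr_fderiv ?_
    ext v
    simp only [ContinuousLinearMap.coe_sub', Pi.sub_apply, innerSL_apply_apply,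
      ContinuousLinearMap.coe_smul', Pi.smul_apply, ContinuousLinearMap.comp_apply,
      ContinuousLinearMap.prod_apply, fderivInnerCLM_apply, ContinuousLinearMap.id_apply,
      smul_eq_mul, inner_sub_left]
    ring_nf
    linarith [hsym v (w - x)]
  have hseg : segment ℝ x y ⊆ ball x r := by
    intro w hw
    rcases hw with ⟨a, b, ha, hb, hab, rfl⟩
    have heq : a • x + b • y - x = b • (y - x) := by
      have hx1 : a • x = x - b • x := by
        rw [eq_sub_iff_add_eq, ← add_smul]; simp [hab]
      rw [hx1]; module
    rw [mem_ball_iff_norm, heq, norm_smul]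
    calc ‖b‖ * ‖y - x‖ ≤ 1 * ‖y - x‖ := by
          apply mul_le_mul_of_nonneg_right _ (norm_nonneg _)
          rw [Real.norm_eq_abs, abs_of_nonneg hb]; linarith
      _ = ‖y - x‖ := one_mul _
      _ < r := by rwa [← mem_ball_iff_norm]
  have hsegnorm : ∀ w ∈ segment ℝ x y, ‖w - x‖ ≤ ‖y - x‖ := by
    intro w hw
    rcases hw with ⟨a, b, ha, hb, hab, rfl⟩
    have heq : a • x + b • y - x = b • (y - x) := by
      have hx1 : a • x = x - b • x := by
        rw [eq_sub_iff_add_eq, ← add_smul]; simp [hab]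
      rw [hx1]; module
    rw [heq, norm_smul]
    calc ‖b‖ * ‖y - x‖ ≤ 1 * ‖y - x‖ := by
          apply mul_le_mul_of_nonneg_right _ (norm_nonneg _)
          rw [Real.norm_eq_abs, abs_of_nonneg hb]; linarith
      _ = ‖y - x‖ := one_mul _
  have hmvt := Convex.norm_image_sub_le_of_norm_hasFDerivWithin_le
    (f := g) (f' := fun w => innerSL ℝ (f' w - f' x - L (w - x)))
    (fun w hw => (hgd w (hseg hw)).hasFDerivWithinAt)
    (fun w hw => by
      rw [innerSL_apply_norm]
      calc ‖f' w - f' x - L (w - x)‖ ≤ ε * ‖w - x‖ := (hball (hseg hw)).2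
        _ ≤ ε * ‖y - x‖ := mul_le_mul_of_nonneg_left (hsegnorm w hw) hε.le)
    (convex_segment x y) (left_mem_segment ℝ x y) (right_mem_segment ℝ x y)
  have hgx : g x = 0 := by simp [hg]
  have habs : |g y| ≤ ε * ‖y - x‖ * ‖y - x‖ := by
    rw [← Real.norm_eq_abs]
    calc ‖g y‖ = ‖g y - g x‖ := by rw [hgx, sub_zero]
      _ ≤ ε * ‖y - x‖ * ‖y - x‖ := hmvt
  calc |f y - f x - ⟪f' x, y - x⟫_ℝ - (1/2) * ⟪L (y - x), y - x⟫_ℝ| = |g y| := rfl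
    _ ≤ ε * ‖y - x‖ * ‖y - x‖ := habs
    _ = ε * ‖y - x‖^2 := by ring

/-- Nearest boundary point and the normal segment. -/
lemma nearest (hΩo : IsOpen Ω) (hc : Ωᶜ.Nonempty) {x : EuclideanSpace ℝ (Fin n)}
    (hx : x ∈ Ω) (hD : 0 < sdist Ω x) :
    ∃ z ∈ frontier Ω, dist x z = sdist Ω x ∧
      (∀ s ∈ Set.Icc (0:ℝ) (sdist Ω x),
        sdist Ω (z + s • ((sdist Ω x)⁻¹ • (x - z))) = s) := by
  set D := sdist Ω x with hDdef
  have hinf : Metric.infDist x Ωᶜ = D := (sdist_eq_infDist (subset_closure hx)).symm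
  obtain ⟨z, hzc, hzd⟩ := (hΩo.isClosed_compl.exists_infDist_eq_dist hc x)
  have hdist : dist x z = D := by rw [← hzd, hinf]
  set ν : EuclideanSpace ℝ (Fin n) := D⁻¹ • (x - z) with hν
  have hνnorm : ‖ν‖ = 1 := by
    rw [hν, norm_smul, Real.norm_eq_abs, abs_of_pos (inv_pos.mpr hD),
      ← dist_eq_norm, hdist]
    field_simp
  have hyx : ∀ s : ℝ, x - (z + s • ν) = (D - s) • ν := by
    intro s
    have hxz : x - z = D • ν := by
      rw [hν, smul_smul, mul_inv_cancel₀ hD.ne', one_smul]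
    rw [sub_add_eq_sub_sub, hxz, ← sub_smul]
  have hdxy : ∀ s : ℝ, s ≤ D → dist x (z + s • ν) = D - s := by
    intro s hs
    rw [dist_eq_norm, hyx s, norm_smul, hνnorm, mul_one, Real.norm_eq_abs,
      abs_of_nonneg (by linarith)]
  have hdzy : ∀ s : ℝ, 0 ≤ s → dist (z + s • ν) z = s := by
    intro s hs
    rw [dist_eq_norm, add_sub_cancel_left, norm_smul, hνnorm, mul_one,
      Real.norm_eq_abs, abs_of_nonneg hs]
  have hinf_ge : ∀ s ∈ Set.Icc (0:ℝ) D, s ≤ Metric.infDist (z + s • ν) Ωᶜ := by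
    intro s hs
    have h1 : Metric.infDist x Ωᶜ ≤ Metric.infDist (z + s • ν) Ωᶜ + dist x (z + s • ν) :=
      Metric.infDist_le_infDist_add_dist
    rw [hinf, hdxy s hs.2] at h1
    linarith
  have hinf_le : ∀ s : ℝ, 0 ≤ s → Metric.infDist (z + s • ν) Ωᶜ ≤ s := by
    intro s hs
    calc Metric.infDist (z + s • ν) Ωᶜ ≤ dist (z + s • ν) z := Metric.infDist_le_dist_of_mem hzc
      _ = s := hdzy s hs
  have hmem : ∀ s : ℝ, 0 < s → s ≤ D → z + s • ν ∈ Ω := by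
    intro s hs hsD
    by_contra hmem
    have h1 := hinf_ge s ⟨hs.le, hsD⟩
    have h0 : Metric.infDist (z + s • ν) Ωᶜ = 0 :=
      Metric.infDist_zero_of_mem (by simpa using hmem)
    rw [h0] at h1
    linarith
  have hzcl : z ∈ closure Ω := by
    rw [Metric.mem_closure_iff]
    intro ε hε
    refine ⟨z + (min (ε/2) D) • ν, hmem _ (lt_min (by linarith) hD) (min_le_right _ _), ?_⟩
    rw [dist_comm, hdzy _ (le_of_lt (lt_min (by linarith) hD))]
    calc min (ε/2) D ≤ ε/2 := min_le_left _ _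
      _ < ε := by linarith
  have hzfront : z ∈ frontier Ω := by
    rw [frontier, hΩo.interior_eq]
    exact ⟨hzcl, hzc⟩
  refine ⟨z, hzfront, hdist, fun s hs => ?_⟩
  rcases eq_or_lt_of_le hs.1 with heq | hpos
  · rw [← heq, zero_smul, add_zero]
    have h1 : Metric.infDist z Ωᶜ = 0 := Metric.infDist_zero_of_mem hzc
    have h2 : Metric.infDist z (closure Ω) = 0 := Metric.infDist_zero_of_mem hzcl
    simp [sdist, h1, h2]
  · have hmem' : z + s • ν ∈ Ω := hmem s hpos hs.2
    rw [sdist_eq_infDist (subset_closure hmem')]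
    exact le_antisymm (hinf_le s hs.1) (hinf_ge s hs)

/-- The gradient of the signed distance along the normal segment is the inward normal. -/
lemma grad_on_segment {δ₀ : ℝ} {Dd : EuclideanSpace ℝ (Fin n) → EuclideanSpace ℝ (Fin n)}
    (hDd : ∀ x, |sdist Ω x| < δ₀ → HasGradientAt (sdist Ω) (Dd x) x)
    (hDdnorm : ∀ x, |sdist Ω x| < δ₀ → ‖Dd x‖ = 1)
    {z ν : EuclideanSpace ℝ (Fin n)} (hν : ‖ν‖ = 1) {D : ℝ} (hD : 0 < D) (hDδ : D < δ₀)
    (hyd : ∀ s ∈ Set.Icc (0:ℝ) D, sdist Ω (z + s • ν) = s)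
    {s₀ : ℝ} (hs₀ : s₀ = 0 ∨ s₀ = D) :
    Dd (z + s₀ • ν) = ν := by
  have hs₀mem : s₀ ∈ Set.Icc (0:ℝ) D := by
    rcases hs₀ with rfl | rfl
    · exact ⟨le_refl _, hD.le⟩
    · exact ⟨hD.le, le_refl _⟩
  set p := z + s₀ • ν with hp
  have hsd : sdist Ω p = s₀ := hyd s₀ hs₀mem
  have habs : |sdist Ω p| < δ₀ := by
    rw [hsd, abs_of_nonneg hs₀mem.1]
    exact lt_of_le_of_lt hs₀mem.2 hDδ
  have hgrad := hDd p habs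
  have hnorm := hDdnorm p habs
  have hc : ∀ t : ℝ, HasDerivAt (fun t : ℝ => z + t • ν) ν t := by
    intro t
    simpa using ((hasDerivAt_id t).smul_const ν).const_add z
  have hg : HasDerivAt (fun t => sdist Ω (z + t • ν)) ⟪Dd p, ν⟫_ℝ s₀ := by
    have h := hgrad.hasFDerivAt.comp_hasDerivAt s₀ (hc s₀)
    simpa [Function.comp_def, InnerProductSpace.toDual_apply_apply] using h
  have hslope := hasDerivAt_iff_tendsto_slope.mp hg
  have hsub : Set.Ioo (0:ℝ) D ⊆ {s₀}ᶜ := by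
    intro t ht
    rcases hs₀ with rfl | rfl
    · exact ne_of_gt ht.1
    · exact ne_of_lt ht.2
  have hle : nhdsWithin s₀ (Set.Ioo (0:ℝ) D) ≤ nhdsWithin s₀ {s₀}ᶜ :=
    nhdsWithin_mono _ hsub
  haveI hnebot : (nhdsWithin s₀ (Set.Ioo (0:ℝ) D)).NeBot := by
    apply mem_closure_iff_nhdsWithin_neBot.mp
    rw [closure_Ioo hD.ne]
    exact hs₀mem
  have htends : Tendsto (slope (fun t => sdist Ω (z + t • ν)) s₀)
      (nhdsWithin s₀ (Set.Ioo (0:ℝ) D)) (nhds ⟪Dd p, ν⟫_ℝ) := hslope.mono_left hle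
  have hconst : Tendsto (slope (fun t => sdist Ω (z + t • ν)) s₀)
      (nhdsWithin s₀ (Set.Ioo (0:ℝ) D)) (nhds 1) := by
    have hev : ∀ᶠ t in nhdsWithin s₀ (Set.Ioo (0:ℝ) D),
        slope (fun t => sdist Ω (z + t • ν)) s₀ t = 1 := by
      filter_upwards [self_mem_nhdsWithin] with t ht
      have ht' : sdist Ω (z + t • ν) = t := hyd t ⟨ht.1.le, ht.2.le⟩
      rw [slope_def_field, ht', hsd, div_self (sub_ne_zero.mpr (hsub ht))]
    exact Tendsto.congr' (EventuallyEq.symm hev) tendsto_const_nhds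
  have hinner : ⟪Dd p, ν⟫_ℝ = 1 := tendsto_nhds_unique htends hconst
  have hsq : ‖Dd p - ν‖^2 = 0 := by
    rw [norm_sub_sq_real, hnorm, hν, hinner]; norm_num
  have hzero : Dd p - ν = 0 := by
    rwa [pow_eq_zero_iff (two_ne_zero), norm_eq_zero] at hsq
  exact sub_eq_zero.mp hzero

lemma inner_eu (a b : EuclideanSpace ℝ (Fin n)) : ⟪a, b⟫_ℝ = ∑ i, a i * b i := by
  simp [PiLp.inner_apply, RCLike.inner_apply, conj_trivial]
  exact Finset.sum_congr rfl fun i _ => mul_comm _ _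

lemma trace_mul_expand (P Q : Matrix (Fin n) (Fin n) ℝ) :
    Matrix.trace (P * Q) = ∑ i, ∑ j, P i j * Q j i := by
  simp [Matrix.trace, Matrix.mul_apply, Matrix.diag]

lemma trace_mul_transpose_symm (S M : Matrix (Fin n) (Fin n) ℝ) (hS : Sᵀ = S) :
    Matrix.trace (S * Mᵀ) = Matrix.trace (S * M) := by
  rw [trace_mul_expand, trace_mul_expand]
  rw [Finset.sum_comm]
  apply Finset.sum_congr rfl; intro i _
  apply Finset.sum_congr rfl; intro j _
  have h1 : S j i = S i j := by
    have h := congrFun (congrFun hS i) j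
    rwa [Matrix.transpose_apply] at h
  simp [Matrix.transpose_apply, h1, mul_comm]

lemma inner_toEuclideanLin (M : Matrix (Fin n) (Fin n) ℝ) (v : EuclideanSpace ℝ (Fin n)) :
    ⟪(Matrix.toEuclideanLin M) v, v⟫_ℝ = quadForm M v := by
  rw [inner_eu, quadForm]
  apply Finset.sum_congr rfl; intro i _
  simp only [Matrix.toEuclideanLin_apply]
  have heq : ((WithLp.equiv 2 (Fin n → ℝ)).symm (M.mulVec ((WithLp.equiv 2 (Fin n → ℝ)) v))) i
      = M.mulVec (fun j => v j) i := rfl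
  simp only [Matrix.mulVec, dotProduct, Finset.sum_mul]
  apply Finset.sum_congr rfl; intro j _
  ring

lemma quadForm_smul (a : ℝ) (M : Matrix (Fin n) (Fin n) ℝ) (v : EuclideanSpace ℝ (Fin n)) :
    quadForm (a • M) v = a * quadForm M v := by
  simp only [quadForm, Matrix.smul_apply, smul_eq_mul, Finset.mul_sum]
  apply Finset.sum_congr rfl; intro i _
  apply Finset.sum_congr rfl; intro j _
  ring

lemma quadForm_sub (M N : Matrix (Fin n) (Fin n) ℝ) (v : EuclideanSpace ℝ (Fin n)) :
    quadForm (M - N) v = quadForm M v - quadForm N v := by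
  simp only [quadForm, Matrix.sub_apply, ← Finset.sum_sub_distrib]
  apply Finset.sum_congr rfl; intro i _
  apply Finset.sum_congr rfl; intro j _
  ring

lemma quadForm_add (M N : Matrix (Fin n) (Fin n) ℝ) (v : EuclideanSpace ℝ (Fin n)) :
    quadForm (M + N) v = quadForm M v + quadForm N v := by
  simp only [quadForm, Matrix.add_apply, ← Finset.sum_add_distrib]
  apply Finset.sum_congr rfl; intro i _
  apply Finset.sum_congr rfl; intro j _
  ring

lemma quadForm_transpose (M : Matrix (Fin n) (Fin n) ℝ) (v : EuclideanSpace ℝ (Fin n)) :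
    quadForm Mᵀ v = quadForm M v := by
  rw [quadForm, quadForm, Finset.sum_comm]
  apply Finset.sum_congr rfl; intro i _
  apply Finset.sum_congr rfl; intro j _
  simp [Matrix.transpose_apply]; ring

lemma quadForm_outer (ν v : EuclideanSpace ℝ (Fin n)) :
    quadForm (Matrix.of fun i j => ν i * ν j) v = (⟪ν, v⟫_ℝ)^2 := by
  rw [inner_eu, quadForm, sq, Finset.sum_mul_sum]
  apply Finset.sum_congr rfl; intro i _
  apply Finset.sum_congr rfl; intro j _
  simp only [Matrix.of_apply]; ring

lemma trace_outer (σM : Matrix (Fin n) (Fin r) ℝ) (ν : EuclideanSpace ℝ (Fin n)) :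
    Matrix.trace (σM * σMᵀ * Matrix.of (fun i j => ν i * ν j))
      = ∑ k, (sigmaT σM ν k)^2 := by
  rw [trace_mul_expand]
  have h1 : ∀ i j : Fin n, (σM * σMᵀ) i j * Matrix.of (fun i j => ν i * ν j) j i
      = ∑ k, σM i k * σM j k * ν j * ν i := by
    intro i j
    rw [Matrix.mul_apply, Finset.sum_mul]
    simp only [Matrix.transpose_apply, Matrix.of_apply]
    apply Finset.sum_congr rfl; intro k _; ring
  have h2 : ∀ k, (sigmaT σM ν k)^2 = ∑ i, ∑ j, σM i k * σM j k * ν j * ν i := by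
    intro k
    simp only [sigmaT, Matrix.mulVec, dotProduct, Matrix.transpose_apply, sq,
      Finset.sum_mul_sum]
    apply Finset.sum_congr rfl; intro i _
    apply Finset.sum_congr rfl; intro j _
    ring
  simp only [h1, h2]
  calc (∑ i, ∑ j, ∑ k, σM i k * σM j k * ν j * ν i)
      = ∑ i, ∑ k, ∑ j, σM i k * σM j k * ν j * ν i :=
        Finset.sum_congr rfl fun i _ => Finset.sum_comm
    _ = ∑ k, ∑ i, ∑ j, σM i k * σM j k * ν j * ν i := Finset.sum_comm

lemma mnorm_nonneg (M : Matrix (Fin n) (Fin r) ℝ) : 0 ≤ mnorm M := Real.sqrt_nonneg _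

lemma mnorm_sq (M : Matrix (Fin n) (Fin r) ℝ) : mnorm M ^ 2 = ∑ i, ∑ j, M i j ^ 2 := by
  rw [mnorm, Real.sq_sqrt]
  exact Finset.sum_nonneg fun i _ => Finset.sum_nonneg fun j _ => sq_nonneg _

lemma entry_le_mnorm (M : Matrix (Fin n) (Fin r) ℝ) (i : Fin n) (j : Fin r) :
    |M i j| ≤ mnorm M := by
  rw [mnorm, ← Real.sqrt_sq_eq_abs]
  apply Real.sqrt_le_sqrt
  calc M i j ^ 2 ≤ ∑ j', M i j' ^ 2 :=
        Finset.single_le_sum (f := fun j' => M i j' ^ 2) (fun j' _ => sq_nonneg _)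
          (Finset.mem_univ j)
    _ ≤ ∑ i', ∑ j', M i' j' ^ 2 :=
        Finset.single_le_sum (f := fun i' => ∑ j', M i' j' ^ 2)
          (fun i' _ => Finset.sum_nonneg fun j' _ => sq_nonneg _) (Finset.mem_univ i)

lemma sigmaT_sub (M N : Matrix (Fin n) (Fin r) ℝ) (ν : EuclideanSpace ℝ (Fin n)) :
    sigmaT (M - N) ν = sigmaT M ν - sigmaT N ν := by
  funext k
  simp [sigmaT, Matrix.transpose_sub, Matrix.sub_mulVec]

lemma norm_sq_sum (ν : EuclideanSpace ℝ (Fin n)) (hν : ‖ν‖ = 1) : ∑ i, ν i ^ 2 = 1 := by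
  have h := EuclideanSpace.norm_eq ν
  rw [hν] at h
  have h2 : ∑ i, ‖ν i‖ ^ 2 = 1 := by
    rw [← Real.sqrt_eq_one]; exact h.symm
  simpa [Real.norm_eq_abs, sq_abs] using h2

lemma sigmaT_sq_le (M : Matrix (Fin n) (Fin r) ℝ) (ν : EuclideanSpace ℝ (Fin n))
    (hν : ‖ν‖ = 1) : ∑ k, (sigmaT M ν k) ^ 2 ≤ mnorm M ^ 2 := by
  rw [mnorm_sq]
  have hstep : ∀ k, (sigmaT M ν k) ^ 2 ≤ ∑ i, M i k ^ 2 := by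
    intro k
    have h1 : sigmaT M ν k = ∑ i, M i k * ν i := by
      simp [sigmaT, Matrix.mulVec, dotProduct, Matrix.transpose_apply]
    rw [h1]
    calc (∑ i, M i k * ν i) ^ 2 ≤ (∑ i, M i k ^ 2) * ∑ i, ν i ^ 2 :=
          Finset.sum_mul_sq_le_sq_mul_sq _ _ _
      _ = ∑ i, M i k ^ 2 := by rw [norm_sq_sum ν hν, mul_one]
  calc ∑ k, (sigmaT M ν k) ^ 2 ≤ ∑ k, ∑ i, M i k ^ 2 :=
        Finset.sum_le_sum fun k _ => hstep k
    _ = ∑ i, ∑ k, M i k ^ 2 := Finset.sum_comm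

lemma trace_sigma_bound (σM : Matrix (Fin n) (Fin r) ℝ) (X : Matrix (Fin n) (Fin n) ℝ)
    {C : ℝ} (hC : mnorm σM ≤ C) :
    |Matrix.trace (σM * σMᵀ * X)| ≤ ((r : ℝ) * C ^ 2) * ∑ i, ∑ j, |X i j| := by
  have hC0 : 0 ≤ C := le_trans (mnorm_nonneg _) hC
  have hentry : ∀ i j, |(σM * σMᵀ) i j| ≤ (r : ℝ) * C ^ 2 := by
    intro i j
    rw [Matrix.mul_apply]
    calc |∑ k, σM i k * σMᵀ k j| ≤ ∑ k, |σM i k * σMᵀ k j| := Finset.abs_sum_le_sum_abs _ _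
      _ ≤ ∑ _k : Fin r, C ^ 2 := by
          apply Finset.sum_le_sum; intro k _
          rw [abs_mul, Matrix.transpose_apply, sq]
          exact mul_le_mul (le_trans (entry_le_mnorm _ _ _) hC)
            (le_trans (entry_le_mnorm _ _ _) hC) (abs_nonneg _) hC0
      _ = (r : ℝ) * C ^ 2 := by simp [mul_comm]
  rw [trace_mul_expand]
  calc |∑ i, ∑ j, (σM * σMᵀ) i j * X j i|
      ≤ ∑ i, ∑ j, |(σM * σMᵀ) i j * X j i| := by
        apply le_trans (Finset.abs_sum_le_sum_abs _ _)
        exact Finset.sum_le_sum fun i _ => Finset.abs_sum_le_sum_abs _ _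
    _ ≤ ∑ i, ∑ j, ((r : ℝ) * C ^ 2) * |X j i| := by
        apply Finset.sum_le_sum; intro i _
        apply Finset.sum_le_sum; intro j _
        rw [abs_mul]
        exact mul_le_mul_of_nonneg_right (hentry i j) (abs_nonneg _)
    _ = ((r : ℝ) * C ^ 2) * ∑ i, ∑ j, |X j i| := by
        rw [Finset.mul_sum]
        exact Finset.sum_congr rfl fun i _ => (Finset.mul_sum _ _ _).symm
    _ = ((r : ℝ) * C ^ 2) * ∑ i, ∑ j, |X i j| := by rw [Finset.sum_comm]

end SMPH

end SMPHelpers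

set_option maxHeartbeats 1000000 in
theorem statement_0
    {n m r : ℕ} (Ω : Set (EuclideanSpace ℝ (Fin n)))
    (hΩo : IsOpen Ω) (hΩconn : IsConnected Ω) (hΩbdd : Bornology.IsBounded Ω)
    (A : Set (Fin m → ℝ)) (hA : IsClosed A) (hAne : A.Nonempty)
    (b : EuclideanSpace ℝ (Fin n) → (Fin m → ℝ) → EuclideanSpace ℝ (Fin n))
    (σ : EuclideanSpace ℝ (Fin n) → (Fin m → ℝ) → Matrix (Fin n) (Fin r) ℝ)
    (hbBdd : ∃ C, ∀ x ∈ closure Ω, ∀ α ∈ A, ‖b x α‖ ≤ C)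
    (hσBdd : ∃ C, ∀ x ∈ closure Ω, ∀ α ∈ A, mnorm (σ x α) ≤ C)
    (hbCont : ContinuousOn (fun q : EuclideanSpace ℝ (Fin n) × (Fin m → ℝ) => b q.1 q.2)
      (closure Ω ×ˢ A))
    (hσCont : ContinuousOn (fun q : EuclideanSpace ℝ (Fin n) × (Fin m → ℝ) => σ q.1 q.2)
      (closure Ω ×ˢ A))
    (δ₀ : ℝ) (hδ₀ : 0 < δ₀)
    (Dd : EuclideanSpace ℝ (Fin n) → EuclideanSpace ℝ (Fin n))
    (D2d : EuclideanSpace ℝ (Fin n) → Matrix (Fin n) (Fin n) ℝ)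
    (hDd : ∀ x, |sdist Ω x| < δ₀ → HasGradientAt (sdist Ω) (Dd x) x)
    (hDdnorm : ∀ x, |sdist Ω x| < δ₀ → ‖Dd x‖ = 1)
    (hD2d : ∀ x, |sdist Ω x| < δ₀ →
      HasFDerivAt Dd (LinearMap.toContinuousLinearMap (Matrix.toEuclideanLin (D2d x))) x)
    (hD2dCont : ContinuousOn D2d {x | |sdist Ω x| < δ₀})
    (ω : ℝ → ℝ) (hω0 : ω 0 = 0) (hωcont : ContinuousAt ω 0) (hωnn : ∀ s, 0 ≤ ω s)
    (hreg22 : ∀ x ∈ closure Ω, ∀ y ∈ closure Ω, ∀ α ∈ A, ‖b x α - b y α‖ ≤ ω ‖x - y‖)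
    (β B : ℝ) (hβlow : 1 / 2 < β) (hβhigh : β ≤ 1) (hB : 0 < B)
    (hreg2 : ∀ x ∈ closure Ω, ∀ y ∈ closure Ω, ∀ α ∈ A,
      mnorm (σ x α - σ y α) ≤ B * ‖x - y‖ ^ β)
    (hirr : ∃ δ > (0 : ℝ), ∃ k > (0 : ℝ), ∃ γ : ℝ, γ < 2 * β - 1 ∧
      ∀ z ∈ frontier Ω, ∃ α₀ ∈ A, sigmaT (σ z α₀) (Dd z) = 0 ∧
        ∀ x ∈ Ω ∩ Metric.ball z δ,
          k * sdist Ω x ^ γ ≤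
            ⟪b x α₀, Dd x⟫_ℝ + Matrix.trace (σ x α₀ * (σ x α₀)ᵀ * D2d x))
    (hSMP : ∀ w : EuclideanSpace ℝ (Fin n) → ℝ, UpperSemicontinuousOn w Ω →
      (∀ x ∈ Ω, ∀ pX ∈ J2plus Ω w x, Fop A b σ x pX.1 pX.2 ≤ 0) →
      (∃ x₀ ∈ Ω, ∀ x ∈ Ω, w x ≤ w x₀) → ∀ x ∈ Ω, ∀ y ∈ Ω, w x = w y)
    (u : EuclideanSpace ℝ (Fin n) → ℝ) (hu : UpperSemicontinuousOn u Ω)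
    (husub : ∀ x ∈ Ω, ∀ pX ∈ J2plus Ω u x, Fop A b σ x pX.1 pX.2 ≤ 0)
    (hgrowth : ∀ ε > (0 : ℝ), ∃ δ, 0 < δ ∧ δ < 1 ∧
      ∀ x ∈ Ω, sdist Ω x < δ → u x ≤ ε * (-Real.log (sdist Ω x))) :
    ∀ x ∈ Ω, ∀ y ∈ Ω, u x = u y := by
  classical
  rcases subsingleton_or_nontrivial (EuclideanSpace ℝ (Fin n)) with hss | hnt
  · intro x hx y hy
    rw [Subsingleton.elim x y]
  have hΩne : Ω.Nonempty := hΩconn.nonempty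
  -- the complement is nonempty
  have hCc : Ωᶜ.Nonempty := by
    obtain ⟨R, hR⟩ := hΩbdd.subset_closedBall 0
    obtain ⟨v, hv⟩ := exists_ne (0 : EuclideanSpace ℝ (Fin n))
    have hvn : 0 < ‖v‖ := norm_pos_iff.mpr hv
    refine ⟨((|R| + 1) / ‖v‖) • v, fun hmem => ?_⟩
    have h1 := hR hmem
    rw [Metric.mem_closedBall, dist_zero_right, norm_smul, Real.norm_eq_abs,
      abs_of_pos (by positivity), div_mul_cancel₀ _ hvn.ne'] at h1
    have h2 := abs_nonneg R
    have h3 := le_abs_self R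
    linarith
  obtain ⟨δ, hδpos, k, hkpos, γ, hγ, hirr'⟩ := hirr
  set e : ℝ := 2 * β - 1 - γ with he
  have hepos : 0 < e := by rw [he]; linarith
  set c₀ : ℝ := (k / (2 * B ^ 2)) ^ e⁻¹ with hc₀def
  have hc₀pos : 0 < c₀ := Real.rpow_pos_of_pos (by positivity) _
  set δ₁ : ℝ := min (min (δ₀ / 2) (δ / 2)) (min (1 / 2) (c₀ / 2)) with hδ₁def
  have hδ₁pos : 0 < δ₁ := by
    apply lt_min (lt_min (by linarith) (by linarith)) (lt_min (by norm_num) (by linarith))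
  have hδ₁δ₀ : δ₁ ≤ δ₀ / 2 := le_trans (min_le_left _ _) (min_le_left _ _)
  have hδ₁δ : δ₁ ≤ δ / 2 := le_trans (min_le_left _ _) (min_le_right _ _)
  have hδ₁1 : δ₁ ≤ 1 / 2 := le_trans (min_le_right _ _) (min_le_left _ _)
  have hδ₁c₀ : δ₁ ≤ c₀ / 2 := le_trans (min_le_right _ _) (min_le_right _ _)
  -- the core barrier computation: no interior max of u + ε log d in the boundary strip
  have core : ∀ ε > (0:ℝ), ∀ xh ∈ Ω, sdist Ω xh < δ₁ →
      (∀ y ∈ Ω, sdist Ω y < δ₁ →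
        u y + ε * Real.log (sdist Ω y) ≤ u xh + ε * Real.log (sdist Ω xh)) → False := by
    intro ε hε xh hxhΩ hDlt hmax
    set D := sdist Ω xh with hDdef
    have hD0 : 0 < D := SMPH.sdist_pos hΩo hCc hxhΩ
    have hDδ₀ : D < δ₀ := by
      have := hδ₁δ₀
      linarith
    obtain ⟨z, hzfr, hdistz, hseg⟩ := SMPH.nearest hΩo hCc hxhΩ hD0
    set ν : EuclideanSpace ℝ (Fin n) := D⁻¹ • (xh - z) with hνdef
    have hνnorm : ‖ν‖ = 1 := by
      rw [hνdef, norm_smul, Real.norm_eq_abs, abs_of_pos (inv_pos.mpr hD0),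
        ← dist_eq_norm, hdistz]
      field_simp
      exact hDdef.symm
    have hxh_eq : z + D • ν = xh := by
      rw [hνdef, smul_smul, mul_inv_cancel₀ hD0.ne', one_smul, add_sub_cancel]
    have hDdz : Dd z = ν := by
      have h := SMPH.grad_on_segment hDd hDdnorm hνnorm hD0 hDδ₀ hseg (Or.inl rfl)
      simpa using h
    have hDdxh : Dd xh = ν := by
      have h := SMPH.grad_on_segment hDd hDdnorm hνnorm hD0 hDδ₀ hseg (Or.inr rfl)
      rwa [hxh_eq] at h
    obtain ⟨α₀, hα₀A, hσ0, hirrx⟩ := hirr' z hzfr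
    -- the gradient field of φ := -ε log d
    set U : Set (EuclideanSpace ℝ (Fin n)) := (sdist Ω) ⁻¹' (Set.Ioo 0 δ₀) with hUdef
    have hUopen : IsOpen U := isOpen_Ioo.preimage SMPH.sdist_cont
    have hxhU : xh ∈ U := ⟨hD0, hDδ₀⟩
    set φfun : EuclideanSpace ℝ (Fin n) → ℝ := fun p => -ε * Real.log (sdist Ω p) with hφdef
    set f' : EuclideanSpace ℝ (Fin n) → EuclideanSpace ℝ (Fin n) :=
      fun p => (-ε * (sdist Ω p)⁻¹) • Dd p with hf'def
    have habs : ∀ p : EuclideanSpace ℝ (Fin n), p ∈ U → |sdist Ω p| < δ₀ := by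
      intro p hp
      rw [abs_of_pos hp.1]
      exact hp.2
    have hgradφ : ∀ p ∈ U, HasGradientAt φfun (f' p) p := by
      intro p hp
      have hfd := (hDd p (habs p hp)).hasFDerivAt
      have hlog := Real.hasDerivAt_log (ne_of_gt hp.1)
      have hcomp := hlog.comp_hasFDerivAt p hfd
      have hneg := hcomp.const_mul (-ε)
      have heq : (-ε) • ((sdist Ω p)⁻¹ •
            ((InnerProductSpace.toDual ℝ (EuclideanSpace ℝ (Fin n))) (Dd p)))
          = (InnerProductSpace.toDual ℝ (EuclideanSpace ℝ (Fin n)))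
              ((-ε * (sdist Ω p)⁻¹) • Dd p) := by
        ext v
        simp [InnerProductSpace.toDual_apply_apply, real_inner_smul_left]
        ring
      rw [heq] at hneg
      have hgr := hneg.hasGradientAt
      rwa [LinearIsometryEquiv.symm_apply_apply] at hgr
    -- second derivative data at xh
    set Mcl := LinearMap.toContinuousLinearMap (Matrix.toEuclideanLin (D2d xh)) with hMcl
    have habsxh : |sdist Ω xh| < δ₀ := habs xh hxhU
    have hDdfd : HasFDerivAt Dd Mcl xh := hD2d xh habsxh
    have hinv : HasDerivAt (fun t : ℝ => -ε * t⁻¹) (-ε * -(D ^ 2)⁻¹) D := by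
      simpa using (hasDerivAt_inv hD0.ne').const_mul (-ε)
    have hcfd : HasFDerivAt (fun p => -ε * (sdist Ω p)⁻¹)
        ((-ε * -(D ^ 2)⁻¹) •
          ((InnerProductSpace.toDual ℝ (EuclideanSpace ℝ (Fin n))) (Dd xh))) xh :=
      by have h := hinv.comp_hasFDerivAt xh (hDd xh habsxh).hasFDerivAt; exact h
    set Lmap := (-ε * D⁻¹) • Mcl + ((-ε * -(D ^ 2)⁻¹) •
      ((InnerProductSpace.toDual ℝ (EuclideanSpace ℝ (Fin n))) ν)).smulRight ν with hLdef
    have hL : HasFDerivAt f' Lmap xh := by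
      rw [hLdef, ← hDdxh]
      exact hcfd.smul hDdfd
    -- the test matrix
    set Xm : Matrix (Fin n) (Fin n) ℝ :=
      (ε * (D ^ 2)⁻¹) • Matrix.of (fun i j => ν i * ν j)
        - (ε * D⁻¹) • ((1/2 : ℝ) • (D2d xh + (D2d xh)ᵀ)) with hXdef
    have hXsymm : Xm.IsSymm := by
      show Xmᵀ = Xm
      ext i j
      simp only [hXdef, Matrix.transpose_apply, Matrix.sub_apply, Matrix.smul_apply,
        Matrix.add_apply, Matrix.of_apply, smul_eq_mul]
      ring
    have hquadX : ∀ v : EuclideanSpace ℝ (Fin n),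
        quadForm Xm v = ⟪Lmap v, v⟫_ℝ := by
      intro v
      rw [hXdef, SMPH.quadForm_sub, SMPH.quadForm_smul, SMPH.quadForm_smul,
        SMPH.quadForm_smul, SMPH.quadForm_add, SMPH.quadForm_transpose,
        SMPH.quadForm_outer]
      rw [hLdef]
      simp only [ContinuousLinearMap.add_apply, ContinuousLinearMap.coe_smul',
        Pi.smul_apply, ContinuousLinearMap.smulRight_apply,
        InnerProductSpace.toDual_apply_apply, inner_add_left, real_inner_smul_left,
        LinearMap.coe_toContinuousLinearMap', smul_eq_mul, hMcl]
      rw [SMPH.inner_toEuclideanLin]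
      ring
    -- superjet membership
    have hsuper : (((-ε * D⁻¹) • ν, Xm) :
        EuclideanSpace ℝ (Fin n) × Matrix (Fin n) (Fin n) ℝ) ∈ J2plus Ω u xh := by
      refine ⟨hXsymm, ?_⟩
      intro ε' hε'
      have h1ev : ∀ᶠ p in nhds xh, HasGradientAt φfun (f' p) p := by
        filter_upwards [hUopen.mem_nhds hxhU] with p hp using hgradφ p hp
      have htay := SMPH.taylor2 h1ev hL ε' hε'
      have hstripev : ∀ᶠ p in nhds xh, sdist Ω p < δ₁ := by
        have := (isOpen_Iio (a := δ₁)).preimage (SMPH.sdist_cont (Ω := Ω))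
        exact this.mem_nhds hDlt
      have hfx : f' xh = (-ε * D⁻¹) • ν := by
        rw [hf'def]
        simp only
        rw [hDdxh, ← hDdef]
      filter_upwards [htay.filter_mono nhdsWithin_le_nhds,
        eventually_nhdsWithin_of_eventually_nhds hstripev,
        self_mem_nhdsWithin] with p htayp hpδ hpΩ
      have hum := hmax p hpΩ hpδ
      have hφdiff : u p - u xh ≤ φfun p - φfun xh := by
        have he1 : φfun p = -ε * Real.log (sdist Ω p) := rfl
        have he2 : φfun xh = -ε * Real.log D := rfl
        rw [he1, he2]
        linarith
      have htayp2 := le_of_abs_le htayp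
      rw [hfx] at htayp2
      have hq := hquadX (p - xh)
      show u p - u xh - ⟪(-ε * D⁻¹) • ν, p - xh⟫_ℝ
        - (1/2 : ℝ) * quadForm Xm (p - xh) ≤ ε' * ‖p - xh‖^2
      rw [hq]
      linarith
    have hFle := husub xh hxhΩ ((-ε * D⁻¹) • ν, Xm) hsuper
    obtain ⟨Cb, hCb⟩ := hbBdd
    obtain ⟨Cσ, hCσ⟩ := hσBdd
    set pvec := (-ε * D⁻¹) • ν with hpv
    set Cσ' := max Cσ 0 with hCσ'def
    have hBdd : BddAbove ((fun α => -⟪b xh α, pvec⟫_ℝ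
        - Matrix.trace (σ xh α * (σ xh α)ᵀ * Xm)) '' A) := by
      refine ⟨max Cb 0 * ‖pvec‖ + ((r:ℝ) * Cσ' ^ 2) * ∑ i, ∑ j, |Xm i j|, ?_⟩
      rintro w ⟨α, hαA, rfl⟩
      have h1 : |⟪b xh α, pvec⟫_ℝ| ≤ ‖b xh α‖ * ‖pvec‖ := abs_real_inner_le_norm _ _
      have h2 : ‖b xh α‖ ≤ max Cb 0 :=
        le_trans (hCb xh (subset_closure hxhΩ) α hαA) (le_max_left Cb 0)
      have hCσle : mnorm (σ xh α) ≤ Cσ' :=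
        le_trans (hCσ xh (subset_closure hxhΩ) α hαA) (le_max_left Cσ 0)
      have h3 := SMPH.trace_sigma_bound (σ xh α) Xm hCσle
      have h4 : -⟪b xh α, pvec⟫_ℝ ≤ max Cb 0 * ‖pvec‖ := by
        calc -⟪b xh α, pvec⟫_ℝ ≤ |⟪b xh α, pvec⟫_ℝ| := neg_le_abs _
          _ ≤ ‖b xh α‖ * ‖pvec‖ := h1
          _ ≤ max Cb 0 * ‖pvec‖ := mul_le_mul_of_nonneg_right h2 (norm_nonneg _)
      have h5 : -Matrix.trace (σ xh α * (σ xh α)ᵀ * Xm)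
          ≤ ((r:ℝ) * Cσ' ^ 2) * ∑ i, ∑ j, |Xm i j| := le_trans (neg_le_abs _) h3
      simp only
      linarith
    have hval : -⟪b xh α₀, pvec⟫_ℝ - Matrix.trace (σ xh α₀ * (σ xh α₀)ᵀ * Xm) ≤ 0 :=
      le_trans (le_csSup hBdd ⟨α₀, hα₀A, rfl⟩) hFle
    -- expand the trace
    set T := ∑ k2, (sigmaT (σ xh α₀) ν k2) ^ 2 with hTdef
    have hSsym : (σ xh α₀ * (σ xh α₀)ᵀ)ᵀ = σ xh α₀ * (σ xh α₀)ᵀ := by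
      rw [Matrix.transpose_mul, Matrix.transpose_transpose]
    have htrX : Matrix.trace (σ xh α₀ * (σ xh α₀)ᵀ * Xm)
        = (ε * (D ^ 2)⁻¹) * T
          - (ε * D⁻¹) * Matrix.trace (σ xh α₀ * (σ xh α₀)ᵀ * D2d xh) := by
      rw [hXdef, Matrix.mul_sub, Matrix.trace_sub, Matrix.mul_smul, Matrix.trace_smul,
        Matrix.mul_smul, Matrix.trace_smul, Matrix.mul_smul, Matrix.trace_smul,
        Matrix.mul_add, Matrix.trace_add, SMPH.trace_mul_transpose_symm _ _ hSsym,
        SMPH.trace_outer]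
      simp only [smul_eq_mul, ← hTdef]
      ring
    have hval2 : (ε * D⁻¹) * (⟪b xh α₀, ν⟫_ℝ
        + Matrix.trace (σ xh α₀ * (σ xh α₀)ᵀ * D2d xh)) ≤ (ε * (D ^ 2)⁻¹) * T := by
      have hip : ⟪b xh α₀, pvec⟫_ℝ = (-ε * D⁻¹) * ⟪b xh α₀, ν⟫_ℝ := by
        rw [hpv, real_inner_smul_right]
      rw [hip, htrX] at hval
      nlinarith [hval]
    have hkey : ⟪b xh α₀, ν⟫_ℝ + Matrix.trace (σ xh α₀ * (σ xh α₀)ᵀ * D2d xh) ≤ T / D := by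
      have hεD : 0 < ε * D⁻¹ := by positivity
      have heq2 : (ε * (D ^ 2)⁻¹) * T = (ε * D⁻¹) * (T / D) := by
        rw [sq, mul_inv, div_eq_mul_inv]
        ring
      rw [heq2] at hval2
      exact (mul_le_mul_iff_right₀ hεD).mp hval2
    -- the irrelevance inequality
    have hballz : xh ∈ Ω ∩ Metric.ball z δ := by
      refine ⟨hxhΩ, ?_⟩
      rw [Metric.mem_ball, hdistz, ← hDdef]
      linarith
    have hirrxh := hirrx xh hballz
    rw [hDdxh, ← hDdef] at hirrxh
    -- bound on T
    have hTbound : T ≤ B ^ 2 * D ^ (2 * β) := by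
      have hsz : sigmaT (σ z α₀) ν = 0 := by rw [← hDdz]; exact hσ0
      have hsub2 : sigmaT (σ xh α₀) ν = sigmaT (σ xh α₀ - σ z α₀) ν := by
        rw [SMPH.sigmaT_sub, hsz, sub_zero]
      have h2 := SMPH.sigmaT_sq_le (σ xh α₀ - σ z α₀) ν hνnorm
      have h3 : mnorm (σ xh α₀ - σ z α₀) ≤ B * ‖xh - z‖ ^ β :=
        hreg2 xh (subset_closure hxhΩ) z (frontier_subset_closure hzfr) α₀ hα₀A
      have h4 : ‖xh - z‖ = D := by rw [← dist_eq_norm, hdistz, ← hDdef]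
      rw [h4] at h3
      have h5 : mnorm (σ xh α₀ - σ z α₀) ^ 2 ≤ (B * D ^ β) ^ 2 :=
        pow_le_pow_left₀ (SMPH.mnorm_nonneg _) h3 2
      have h6 : (B * D ^ β) ^ 2 = B ^ 2 * D ^ (2 * β) := by
        have hh : (D ^ β) ^ 2 = D ^ (2 * β) := by
          rw [sq, ← Real.rpow_add hD0]
          congr 1
          ring
        rw [mul_pow, hh]
      calc T = ∑ k2, (sigmaT (σ xh α₀ - σ z α₀) ν k2) ^ 2 := by rw [hTdef, hsub2]
        _ ≤ mnorm (σ xh α₀ - σ z α₀) ^ 2 := h2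
        _ ≤ (B * D ^ β) ^ 2 := h5
        _ = B ^ 2 * D ^ (2 * β) := h6
    have hTnonneg : 0 ≤ T := Finset.sum_nonneg fun k2 _ => sq_nonneg _
    have hfinal : k * D ^ γ ≤ B ^ 2 * D ^ (2 * β) / D := by
      calc k * D ^ γ ≤ ⟪b xh α₀, ν⟫_ℝ
            + Matrix.trace (σ xh α₀ * (σ xh α₀)ᵀ * D2d xh) := hirrxh
        _ ≤ T / D := hkey
        _ ≤ B ^ 2 * D ^ (2 * β) / D := by gcongr
    have hstep1 : B ^ 2 * D ^ (2 * β) / D = B ^ 2 * D ^ (2 * β - 1) := by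
      rw [mul_div_assoc]
      congr 1
      rw [Real.rpow_sub hD0, Real.rpow_one]
    have hstep2 : k ≤ B ^ 2 * D ^ e := by
      rw [hstep1] at hfinal
      have hγpos : 0 < D ^ γ := Real.rpow_pos_of_pos hD0 γ
      have h7 : k * D ^ γ / D ^ γ ≤ B ^ 2 * D ^ (2 * β - 1) / D ^ γ := by gcongr
      rw [mul_div_cancel_right₀ _ hγpos.ne'] at h7
      rw [he]
      rwa [mul_div_assoc, ← Real.rpow_sub hD0] at h7
    have hDc₀ : D < c₀ := by
      have := hδ₁c₀
      linarith
    have h8 : D ^ e < c₀ ^ e := Real.rpow_lt_rpow hD0.le hDc₀ hepos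
    have h9 : c₀ ^ e = k / (2 * B ^ 2) := by
      rw [hc₀def, ← Real.rpow_mul (by positivity), inv_mul_cancel₀ hepos.ne', Real.rpow_one]
    have h10 : B ^ 2 * c₀ ^ e = k / 2 := by
      rw [h9]
      field_simp
    have h11 : B ^ 2 * D ^ e < B ^ 2 * c₀ ^ e :=
      mul_lt_mul_of_pos_left h8 (by positivity)
    linarith

  -- attainment of the maximum of u + ε log d on the strip, at the inner boundary
  have attain : ∀ ε > (0:ℝ), ∀ x ∈ Ω, sdist Ω x < δ₁ →
      ∃ xh ∈ Ω, sdist Ω xh = δ₁ ∧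
        (∀ y ∈ Ω, sdist Ω y < δ₁ →
          u y + ε * Real.log (sdist Ω y) ≤ u xh + ε * Real.log δ₁) := by
    intro ε hε x hxΩ hxlt
    obtain ⟨δ₂, hδ₂pos, hδ₂lt1, hgr⟩ := hgrowth (ε/2) (half_pos hε)
    set w : EuclideanSpace ℝ (Fin n) → ℝ :=
      fun p => u p + ε * Real.log (sdist Ω p) with hwdef
    set S : Set (EuclideanSpace ℝ (Fin n)) := {p | p ∈ Ω ∧ sdist Ω p < δ₁} with hSdef
    have hxS : x ∈ S := ⟨hxΩ, hxlt⟩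
    set K₂ : Set (EuclideanSpace ℝ (Fin n)) :=
      {p | p ∈ closure Ω ∧ δ₂ ≤ sdist Ω p} with hK₂def
    have hK₂cl : IsClosed K₂ := by
      have hh : K₂ = closure Ω ∩ (sdist Ω) ⁻¹' (Set.Ici δ₂) := rfl
      rw [hh]
      exact isClosed_closure.inter (isClosed_Ici.preimage SMPH.sdist_cont)
    have hK₂comp : IsCompact K₂ :=
      Metric.isCompact_of_isClosed_isBounded hK₂cl
        (hΩbdd.closure.subset (fun p hp => hp.1))
    have hK₂sub : K₂ ⊆ Ω := fun p hp => SMPH.mem_of_sdist_pos (lt_of_lt_of_le hδ₂pos hp.2)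
    have hK₂bdd := SMPH.usc_bddAbove hK₂comp (hu.mono hK₂sub)
    have hwb : ∀ p ∈ S, w p ≤ max 0 (sSup (u '' K₂)) := by
      intro p hp
      have hdp : 0 < sdist Ω p := SMPH.sdist_pos hΩo hCc hp.1
      have hlog0 : Real.log (sdist Ω p) ≤ 0 :=
        Real.log_nonpos hdp.le (by linarith [hp.2, hδ₁1])
      rcases lt_or_ge (sdist Ω p) δ₂ with hcase | hcase
      · have h1 := hgr p hp.1 hcase
        have h2 : w p ≤ (ε/2) * Real.log (sdist Ω p) := by
          have hww : w p = u p + ε * Real.log (sdist Ω p) := rfl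
          rw [hww]
          linarith
        have h3 : (ε/2) * Real.log (sdist Ω p) ≤ 0 :=
          mul_nonpos_of_nonneg_of_nonpos (by linarith) hlog0
        exact le_trans (le_trans h2 h3) (le_max_left _ _)
      · have hpK₂ : p ∈ K₂ := ⟨subset_closure hp.1, hcase⟩
        have h1 : u p ≤ sSup (u '' K₂) := le_csSup hK₂bdd ⟨p, hpK₂, rfl⟩
        have h2 : ε * Real.log (sdist Ω p) ≤ 0 :=
          mul_nonpos_of_nonneg_of_nonpos hε.le hlog0
        calc w p = u p + ε * Real.log (sdist Ω p) := rfl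
          _ ≤ sSup (u '' K₂) + 0 := add_le_add h1 h2
          _ ≤ max 0 (sSup (u '' K₂)) := by rw [add_zero]; exact le_max_right _ _
    have hbddS : BddAbove (w '' S) := by
      refine ⟨max 0 (sSup (u '' K₂)), ?_⟩
      rintro q ⟨p, hp, rfl⟩
      exact hwb p hp
    have hSne : (w '' S).Nonempty := ⟨w x, x, hxS, rfl⟩
    set M := sSup (w '' S) with hMdef
    obtain ⟨t, -, htM, htmem⟩ := exists_seq_tendsto_sSup hSne hbddS
    have hsel : ∀ j, ∃ p ∈ S, w p = t j := fun j => htmem j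
    choose y hyS hyw using hsel
    have hycl : ∀ j, y j ∈ closure Ω := fun j => subset_closure (hyS j).1
    have hclcomp : IsCompact (closure Ω) :=
      Metric.isCompact_of_isClosed_isBounded isClosed_closure hΩbdd.closure
    obtain ⟨xh, hxhcl, φ, hφmono, hφconv⟩ := hclcomp.tendsto_subseq hycl
    have hwtend : Tendsto (fun j => w (y (φ j))) atTop (nhds M) := by
      have heqt : (fun j => w (y (φ j))) = t ∘ φ := funext fun j => hyw (φ j)
      rw [heqt]
      exact htM.comp hφmono.tendsto_atTop
    have hdtend : Tendsto (fun j => sdist Ω (y (φ j))) atTop (nhds (sdist Ω xh)) :=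
      (SMPH.sdist_cont.continuousAt.tendsto).comp hφconv
    have hxh0 : 0 < sdist Ω xh := by
      rcases lt_or_ge 0 (sdist Ω xh) with h | h
      · exact h
      · exfalso
        have h0 : sdist Ω xh = 0 := le_antisymm h (SMPH.sdist_nonneg_of_mem_closure hxhcl)
        have hne : ∀ j, sdist Ω (y (φ j)) ≠ 0 :=
          fun j => (SMPH.sdist_pos hΩo hCc (hyS (φ j)).1).ne'
        have hd0 : Tendsto (fun j => sdist Ω (y (φ j))) atTop (nhds 0) := h0 ▸ hdtend
        have hdln : Tendsto (fun j => sdist Ω (y (φ j))) atTop (nhdsWithin 0 {0}ᶜ) :=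
          tendsto_nhdsWithin_of_tendsto_nhds_of_eventually_within _ hd0
            (Eventually.of_forall fun j => hne j)
        have hlogbot : Tendsto (fun j => Real.log (sdist Ω (y (φ j)))) atTop atBot :=
          Real.tendsto_log_nhdsNE_zero.comp hdln
        have hlogbot2 : Tendsto (fun j => ε/2 * Real.log (sdist Ω (y (φ j)))) atTop atBot :=
          Tendsto.const_mul_atBot (half_pos hε) hlogbot
        have hev1 : ∀ᶠ j in atTop, sdist Ω (y (φ j)) < δ₂ :=
          hd0.eventually_lt_const hδ₂pos
        have hev2 : ∀ᶠ j in atTop, ε/2 * Real.log (sdist Ω (y (φ j))) < M - 1 :=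
          hlogbot2.eventually (eventually_lt_atBot (M - 1))
        have hev3 : ∀ᶠ j in atTop, M - 1 < w (y (φ j)) :=
          hwtend.eventually (eventually_gt_nhds (by linarith))
        rcases (hev1.and (hev2.and hev3)).exists with ⟨j, hj1, hj2, hj3⟩
        have h1 := hgr (y (φ j)) (hyS (φ j)).1 hj1
        have hww : w (y (φ j)) = u (y (φ j)) + ε * Real.log (sdist Ω (y (φ j))) := rfl
        rw [hww] at hj3
        linarith
    have hxhΩ2 : xh ∈ Ω := SMPH.mem_of_sdist_pos hxh0
    have hxhle : sdist Ω xh ≤ δ₁ :=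
      le_of_tendsto hdtend (Eventually.of_forall fun j => (hyS (φ j)).2.le)
    have hwM : ∀ p ∈ S, w p ≤ M := fun p hp => le_csSup hbddS ⟨p, hp, rfl⟩
    have hMle : M ≤ w xh := by
      by_contra hcon
      push_neg at hcon
      have hq4 : 0 < (M - w xh) / 4 := div_pos (sub_pos.mpr hcon) four_pos
      have husc := hu xh hxhΩ2 (u xh + (M - w xh)/4) (by linarith)
      have hlogc : Tendsto (fun p => ε * Real.log (sdist Ω p)) (nhds xh)
          (nhds (ε * Real.log (sdist Ω xh))) :=
        Tendsto.const_mul ε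
          ((Real.continuousAt_log hxh0.ne').comp SMPH.sdist_cont.continuousAt)
      have hev4 : ∀ᶠ p in nhds xh,
          ε * Real.log (sdist Ω p) < ε * Real.log (sdist Ω xh) + (M - w xh)/4 :=
        hlogc.eventually_lt_const (by linarith)
      have htw : Tendsto (fun j => y (φ j)) atTop (nhdsWithin xh Ω) :=
        tendsto_nhdsWithin_of_tendsto_nhds_of_eventually_within _ hφconv
          (Eventually.of_forall fun j => (hyS (φ j)).1)
      have hev5 := htw.eventually (husc.and (eventually_nhdsWithin_of_eventually_nhds hev4))
      have hev6 : ∀ᶠ j in atTop, w xh + (M - w xh)/2 < w (y (φ j)) :=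
        hwtend.eventually (eventually_gt_nhds (by linarith))
      rcases (hev5.and hev6).exists with ⟨j, ⟨hj1, hj2⟩, hj3⟩
      have hww : w (y (φ j)) = u (y (φ j)) + ε * Real.log (sdist Ω (y (φ j))) := rfl
      have hwxh : w xh = u xh + ε * Real.log (sdist Ω xh) := rfl
      rw [hww] at hj3
      rw [hwxh] at hj3
      linarith
    rcases lt_or_eq_of_le hxhle with hxhlt | hxheq
    · exfalso
      refine core ε hε xh hxhΩ2 hxhlt (fun p hp1 hp2 => ?_)
      exact le_trans (hwM p ⟨hp1, hp2⟩) hMle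
    · refine ⟨xh, hxhΩ2, hxheq, fun p hp1 hp2 => ?_⟩
      have h1 := le_trans (hwM p ⟨hp1, hp2⟩) hMle
      have hwp : w p = u p + ε * Real.log (sdist Ω p) := rfl
      have hwxh : w xh = u xh + ε * Real.log (sdist Ω xh) := rfl
      rw [hwp, hwxh, hxheq] at h1
      exact h1

  -- the compact core
  set K : Set (EuclideanSpace ℝ (Fin n)) := {p | p ∈ closure Ω ∧ δ₁ ≤ sdist Ω p} with hKdef
  have hKsub : K ⊆ Ω := fun p hp => SMPH.mem_of_sdist_pos (lt_of_lt_of_le hδ₁pos hp.2)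
  have hKcl : IsClosed K := by
    have : K = closure Ω ∩ (sdist Ω) ⁻¹' (Set.Ici δ₁) := rfl
    rw [this]
    exact isClosed_closure.inter (isClosed_Ici.preimage SMPH.sdist_cont)
  have hKcomp : IsCompact K :=
    Metric.isCompact_of_isClosed_isBounded hKcl
      (hΩbdd.closure.subset (fun p hp => hp.1))
  have hKne : K.Nonempty := by
    obtain ⟨x, hx⟩ := hΩne
    rcases lt_or_ge (sdist Ω x) δ₁ with hlt | hge
    · obtain ⟨xh, hxhΩ, hxheq, -⟩ := attain 1 one_pos x hx hlt
      exact ⟨xh, subset_closure hxhΩ, le_of_eq hxheq.symm⟩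
    · exact ⟨x, subset_closure hx, hge⟩
  obtain ⟨x₀, hx₀K, hx₀max⟩ := SMPH.usc_exists_max hKcomp hKne (hu.mono hKsub)
  -- u is globally bounded by u x₀
  have hub : ∀ p ∈ Ω, u p ≤ u x₀ := by
    intro p hp
    rcases lt_or_ge (sdist Ω p) δ₁ with hlt | hge
    · -- barrier estimate, let ε → 0
      have hdp : 0 < sdist Ω p := SMPH.sdist_pos hΩo hCc hp
      have hlog : Real.log (sdist Ω p) ≤ Real.log δ₁ := Real.log_le_log hdp hlt.le
      set c : ℝ := Real.log δ₁ - Real.log (sdist Ω p) with hcdef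
      have hc0 : 0 ≤ c := by rw [hcdef]; linarith
      have hbound : ∀ η > (0:ℝ), u p ≤ u x₀ + η := by
        intro η hη
        set ε : ℝ := η / (c + 1) with hεdef
        have hεpos : 0 < ε := by positivity
        obtain ⟨xh, hxhΩ, hxheq, hxhmax⟩ := attain ε hεpos p hp hlt
        have h1 := hxhmax p hp hlt
        have h2 : u xh ≤ u x₀ := hx₀max xh ⟨subset_closure hxhΩ, le_of_eq hxheq.symm⟩
        have h3 : ε * c ≤ η := by
          rw [hεdef]
          rw [div_mul_eq_mul_div, div_le_iff₀ (by positivity)]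
          nlinarith
        have h4 : u p ≤ u xh + ε * c := by
          rw [hcdef]; nlinarith [h1]
        linarith
      by_contra hcon
      push_neg at hcon
      have := hbound ((u p - u x₀) / 2) (by linarith)
      linarith
    · exact hx₀max p ⟨subset_closure hp, hge⟩
  exact hSMP u hu husub ⟨x₀, hKsub hx₀K, hub⟩
end
end

section
/- Let Ω ⊂ ℝⁿ be a bounded connected open set whose signed distance function d is C² on a neighborhood of ∂Ω. Assume condition (reg2) (β-Hölder continuity of σ with β ∈ (1/2,1]) and condition (irrelevant). Then for every M ≥ 0 there exists δ > 0 such that for every x ∈ Ω_δ one has F[−log d](x) > M, i.e. sup_{α∈A} ( b(x,α)·Dd(x)/d(x) + tr(a(x,α)D²d(x))/d(x) − |σ(x,α)ᵀ Dd(x)|²/d(x)² ) > M. -/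
open scoped InnerProductSpace Matrix
open Filter

noncomputable section

/-! ### Auxiliary lemmas -/

lemma mnorm_nonneg' {n r : ℕ} (M : Matrix (Fin n) (Fin r) ℝ) : 0 ≤ mnorm M :=
  Real.sqrt_nonneg _

lemma mnorm_sq' {n r : ℕ} (M : Matrix (Fin n) (Fin r) ℝ) :
    mnorm M ^ 2 = ∑ i, ∑ j, M i j ^ 2 :=
  Real.sq_sqrt (Finset.sum_nonneg fun _ _ => Finset.sum_nonneg fun _ _ => sq_nonneg _)

lemma entry_le_mnorm' {n r : ℕ} (M : Matrix (Fin n) (Fin r) ℝ) (i : Fin n) (j : Fin r) :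
    |M i j| ≤ mnorm M := by
  rw [← Real.sqrt_sq_eq_abs]
  apply Real.sqrt_le_sqrt
  calc M i j ^ 2 ≤ ∑ l, M i l ^ 2 :=
        Finset.single_le_sum (fun l _ => sq_nonneg (M i l)) (Finset.mem_univ j)
    _ ≤ ∑ p, ∑ l, M p l ^ 2 :=
        Finset.single_le_sum (f := fun p => ∑ l, M p l ^ 2)
          (fun p _ => Finset.sum_nonneg fun l _ => sq_nonneg _) (Finset.mem_univ i)

lemma sq_sum_bound' {n r : ℕ} (M : Matrix (Fin n) (Fin r) ℝ) (w : Fin n → ℝ) :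
    ∑ j, (∑ i, M i j * w i) ^ 2 ≤ (∑ i, ∑ j, M i j ^ 2) * ∑ i, w i ^ 2 := by
  calc ∑ j, (∑ i, M i j * w i) ^ 2
      ≤ ∑ j, (∑ i, M i j ^ 2) * ∑ i, w i ^ 2 :=
        Finset.sum_le_sum fun j _ => Finset.sum_mul_sq_le_sq_mul_sq _ _ _
    _ = (∑ i, ∑ j, M i j ^ 2) * ∑ i, w i ^ 2 := by
        rw [← Finset.sum_mul, Finset.sum_comm]

lemma euclid_sum_sq' {n : ℕ} (x : EuclideanSpace ℝ (Fin n)) :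
    ∑ i, x i ^ 2 = ‖x‖ ^ 2 := by
  have h : ∑ i, ‖x i‖ ^ 2 = ∑ i, x i ^ 2 := by
    simp [Real.norm_eq_abs, sq_abs]
  rw [EuclideanSpace.norm_eq, ← h, Real.sq_sqrt]
  exact Finset.sum_nonneg fun i _ => sq_nonneg _

lemma sigmaT_apply' {n r : ℕ} (M : Matrix (Fin n) (Fin r) ℝ) (v : EuclideanSpace ℝ (Fin n))
    (j : Fin r) : sigmaT M v j = ∑ i, M i j * v i := by
  simp [sigmaT, Matrix.mulVec, dotProduct, Matrix.transpose_apply]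

lemma trace_expand' {n r : ℕ} (σM : Matrix (Fin n) (Fin r) ℝ) (X : Matrix (Fin n) (Fin n) ℝ) :
    Matrix.trace (σM * σMᵀ * X) = ∑ i, ∑ j, ∑ l, σM i l * σM j l * X j i := by
  simp only [Matrix.trace, Matrix.diag, Matrix.mul_apply, Matrix.transpose_apply]
  apply Finset.sum_congr rfl; intro i _
  rw [Finset.sum_congr rfl (fun j _ => Finset.sum_mul (Finset.univ) _ (X j i))]

lemma trace_bound' {n r : ℕ} (σM : Matrix (Fin n) (Fin r) ℝ) (X : Matrix (Fin n) (Fin n) ℝ)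
    {C T : ℝ} (hC : ∀ i l, |σM i l| ≤ C) (hT : ∀ i j, |X i j| ≤ T) :
    |Matrix.trace (σM * σMᵀ * X)| ≤ (n * n * r : ℕ) * (C * C * T) := by
  rw [trace_expand']
  calc |∑ i, ∑ j, ∑ l, σM i l * σM j l * X j i|
      ≤ ∑ i, ∑ j, ∑ l, |σM i l * σM j l * X j i| := by
        refine (Finset.abs_sum_le_sum_abs _ _).trans (Finset.sum_le_sum fun i _ => ?_)
        refine (Finset.abs_sum_le_sum_abs _ _).trans (Finset.sum_le_sum fun j _ => ?_)
        exact Finset.abs_sum_le_sum_abs _ _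
    _ ≤ ∑ _i : Fin n, ∑ _j : Fin n, ∑ _l : Fin r, C * C * T := by
        refine Finset.sum_le_sum fun i _ => Finset.sum_le_sum fun j _ =>
          Finset.sum_le_sum fun l _ => ?_
        rw [abs_mul, abs_mul]
        have h1 : (0:ℝ) ≤ C := le_trans (abs_nonneg _) (hC i l)
        have h2 : (0:ℝ) ≤ T := le_trans (abs_nonneg _) (hT j i)
        exact mul_le_mul (mul_le_mul (hC i l) (hC j l) (abs_nonneg _) h1) (hT j i)
          (abs_nonneg _) (mul_nonneg h1 h1)
    _ = (n * n * r : ℕ) * (C * C * T) := by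
        simp [Finset.sum_const, Finset.card_univ]
        ring

lemma continuous_sdist' {n : ℕ} (Ω : Set (EuclideanSpace ℝ (Fin n))) :
    Continuous (sdist Ω) :=
  (Metric.continuous_infDist_pt _).sub (Metric.continuous_infDist_pt _)

lemma exists_frontier_dist_le' {n : ℕ} {Ω : Set (EuclideanSpace ℝ (Fin n))} (hΩo : IsOpen Ω)
    {x y : EuclideanSpace ℝ (Fin n)} (hx : x ∈ Ω) (hy : y ∉ Ω) :
    ∃ w ∈ frontier Ω, dist x w ≤ dist x y := by
  set p : ℝ → EuclideanSpace ℝ (Fin n) := fun t => x + t • (y - x) with hp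
  have hpc : Continuous p := continuous_const.add (continuous_id.smul continuous_const)
  set S := Set.Icc (0:ℝ) 1 ∩ p ⁻¹' Ωᶜ with hS
  have hS1 : (1:ℝ) ∈ S := by
    refine ⟨⟨zero_le_one, le_refl 1⟩, ?_⟩
    simp only [Set.mem_preimage, hp, one_smul]
    have h : x + (y - x) = y := by abel
    rw [h]; exact hy
  have hSc : IsClosed S := isClosed_Icc.inter (hΩo.isClosed_compl.preimage hpc)
  have hbdd : BddBelow S := ⟨0, fun t ht => ht.1.1⟩
  set t0 := sInf S with ht0
  have ht0S : t0 ∈ S := hSc.csInf_mem ⟨1, hS1⟩ hbdd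
  have hp0 : p 0 = x := by simp [hp]
  have ht0pos : 0 < t0 := by
    rcases lt_or_eq_of_le ht0S.1.1 with h | h
    · exact h
    · exfalso; apply ht0S.2; rw [← h, hp0]; exact hx
  have hmaps : Set.MapsTo p (Set.Ico 0 t0) Ω := by
    intro t ht
    by_contra hcon
    have htS : t ∈ S := ⟨⟨ht.1, le_trans ht.2.le ht0S.1.2⟩, hcon⟩
    exact absurd (csInf_le hbdd htS) (not_le.mpr ht.2)
  have hw : p t0 ∈ closure Ω := by
    have h1 : t0 ∈ closure (Set.Ico 0 t0) := by
      rw [closure_Ico ht0pos.ne]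
      exact ⟨ht0pos.le, le_refl _⟩
    exact (hmaps.closure hpc) h1
  refine ⟨p t0, ?_, ?_⟩
  · rw [hΩo.frontier_eq]; exact ⟨hw, ht0S.2⟩
  · have hdd : dist x (p t0) = t0 * dist x y := by
      rw [dist_eq_norm, dist_eq_norm]
      have h2 : x - p t0 = t0 • (x - y) := by
        simp only [hp]
        rw [smul_sub, smul_sub]
        abel
      rw [h2, norm_smul, Real.norm_eq_abs, abs_of_nonneg ht0pos.le]
    rw [hdd]
    calc t0 * dist x y ≤ 1 * dist x y := mul_le_mul_of_nonneg_right ht0S.1.2 dist_nonneg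
      _ = dist x y := one_mul _

lemma bdist_le_infDist_compl' {n : ℕ} {Ω : Set (EuclideanSpace ℝ (Fin n))} (hΩo : IsOpen Ω)
    (hcne : Ωᶜ.Nonempty) {x : EuclideanSpace ℝ (Fin n)} (hx : x ∈ Ω) :
    Metric.infDist x (frontier Ω) ≤ Metric.infDist x Ωᶜ := by
  by_contra hcon
  push_neg at hcon
  obtain ⟨y, hy, hdy⟩ := (Metric.infDist_lt_iff hcne).mp hcon
  obtain ⟨w, hwf, hwd⟩ := exists_frontier_dist_le' hΩo hx hy
  exact absurd (le_trans (Metric.infDist_le_dist_of_mem hwf) hwd) (not_le.mpr hdy)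

lemma abs_sdist_le_bdist' {n : ℕ} {Ω : Set (EuclideanSpace ℝ (Fin n))} (hΩo : IsOpen Ω)
    (hfr : (frontier Ω).Nonempty) (x : EuclideanSpace ℝ (Fin n)) :
    |sdist Ω x| ≤ Metric.infDist x (frontier Ω) := by
  by_cases hx : x ∈ closure Ω
  · have h1 : Metric.infDist x (closure Ω) = 0 := Metric.infDist_zero_of_mem hx
    have h2 : Metric.infDist x Ωᶜ ≤ Metric.infDist x (frontier Ω) := by
      apply Metric.infDist_le_infDist_of_subset _ hfr
      intro z hz
      rw [hΩo.frontier_eq] at hz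
      exact hz.2
    rw [sdist, h1, sub_zero, abs_of_nonneg Metric.infDist_nonneg]
    exact h2
  · have h1 : Metric.infDist x Ωᶜ = 0 :=
      Metric.infDist_zero_of_mem (fun hxx => hx (subset_closure hxx))
    have h2 : Metric.infDist x (closure Ω) ≤ Metric.infDist x (frontier Ω) :=
      Metric.infDist_le_infDist_of_subset frontier_subset_closure hfr
    rw [sdist, h1, zero_sub, abs_neg, abs_of_nonneg Metric.infDist_nonneg]
    exact h2

lemma sq_add_le' (a b : ℝ) : (a + b) ^ 2 ≤ 2 * a ^ 2 + 2 * b ^ 2 := by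
  nlinarith [sq_nonneg (a - b)]

lemma onevar' (k B' Q c e : ℝ) (hk : 0 < k) (hB' : 0 ≤ B') (hQ : 0 ≤ Q) (hc : c < 0)
    (he : 0 < e) :
    ∃ δ > (0:ℝ), ∀ d : ℝ, 0 < d → d < δ → B' * d ^ (c + e) + Q < k * d ^ c := by
  set a2 : ℝ := k / (2 * (B' + 1)) with ha2
  have ha2pos : 0 < a2 := by positivity
  set a3 : ℝ := 2 * (Q + 1) / k with ha3
  have ha3pos : 0 < a3 := by positivity
  set δ2 : ℝ := a2 ^ (1 / e) with hδ2
  set δ3 : ℝ := a3 ^ (1 / c) with hδ3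
  refine ⟨min δ2 δ3, lt_min (Real.rpow_pos_of_pos ha2pos _) (Real.rpow_pos_of_pos ha3pos _), ?_⟩
  intro d hd0 hdδ
  have hd2 : d ≤ δ2 := le_of_lt (lt_of_lt_of_le hdδ (min_le_left _ _))
  have hd3 : d ≤ δ3 := le_of_lt (lt_of_lt_of_le hdδ (min_le_right _ _))
  have hdc : 0 < d ^ c := Real.rpow_pos_of_pos hd0 _
  have hδ2e : δ2 ^ e = a2 := by
    rw [hδ2, ← Real.rpow_mul ha2pos.le, one_div, inv_mul_cancel₀ he.ne', Real.rpow_one]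
  have hδ3c : δ3 ^ c = a3 := by
    rw [hδ3, ← Real.rpow_mul ha3pos.le, one_div, inv_mul_cancel₀ hc.ne, Real.rpow_one]
  have h1 : d ^ e ≤ a2 := by
    rw [← hδ2e]; exact Real.rpow_le_rpow hd0.le hd2 he.le
  have h2 : a3 ≤ d ^ c := by
    rw [← hδ3c]; exact Real.rpow_le_rpow_of_nonpos hd0 hd3 hc.le
  have key1 : B' * d ^ (c + e) ≤ k / 2 * d ^ c := by
    rw [Real.rpow_add hd0]
    have hBe : B' * d ^ e ≤ k / 2 := by
      have h3 : B' * d ^ e ≤ B' * a2 := mul_le_mul_of_nonneg_left h1 hB'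
      have h4 : B' * a2 ≤ k / 2 := by
        rw [ha2, mul_div_assoc']
        rw [div_le_div_iff₀ (by positivity : (0:ℝ) < 2 * (B' + 1)) two_pos]
        nlinarith
      linarith
    calc B' * (d ^ c * d ^ e) = B' * d ^ e * d ^ c := by ring
      _ ≤ k / 2 * d ^ c := mul_le_mul_of_nonneg_right hBe hdc.le
  have key2 : Q + 1 ≤ k / 2 * d ^ c := by
    have h5 := mul_le_mul_of_nonneg_left h2 (half_pos hk).le
    have h6 : k / 2 * a3 = Q + 1 := by
      rw [ha3]; field_simp
    linarith
  linarith

theorem statement_2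
    {n m r : ℕ} (Ω : Set (EuclideanSpace ℝ (Fin n)))
    (hΩo : IsOpen Ω) (hΩconn : IsConnected Ω) (hΩbdd : Bornology.IsBounded Ω)
    (A : Set (Fin m → ℝ)) (hA : IsClosed A) (hAne : A.Nonempty)
    (b : EuclideanSpace ℝ (Fin n) → (Fin m → ℝ) → EuclideanSpace ℝ (Fin n))
    (σ : EuclideanSpace ℝ (Fin n) → (Fin m → ℝ) → Matrix (Fin n) (Fin r) ℝ)
    (hbBdd : ∃ C, ∀ x ∈ closure Ω, ∀ α ∈ A, ‖b x α‖ ≤ C)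
    (hσBdd : ∃ C, ∀ x ∈ closure Ω, ∀ α ∈ A, mnorm (σ x α) ≤ C)
    (hbCont : ContinuousOn (fun q : EuclideanSpace ℝ (Fin n) × (Fin m → ℝ) => b q.1 q.2)
      (closure Ω ×ˢ A))
    (hσCont : ContinuousOn (fun q : EuclideanSpace ℝ (Fin n) × (Fin m → ℝ) => σ q.1 q.2)
      (closure Ω ×ˢ A))
    (δ₀ : ℝ) (hδ₀ : 0 < δ₀)
    (Dd : EuclideanSpace ℝ (Fin n) → EuclideanSpace ℝ (Fin n))
    (D2d : EuclideanSpace ℝ (Fin n) → Matrix (Fin n) (Fin n) ℝ)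
    (hDd : ∀ x, |sdist Ω x| < δ₀ → HasGradientAt (sdist Ω) (Dd x) x)
    (hDdnorm : ∀ x, |sdist Ω x| < δ₀ → ‖Dd x‖ = 1)
    (hD2d : ∀ x, |sdist Ω x| < δ₀ →
      HasFDerivAt Dd (LinearMap.toContinuousLinearMap (Matrix.toEuclideanLin (D2d x))) x)
    (hD2dCont : ContinuousOn D2d {x | |sdist Ω x| < δ₀})
    (β B : ℝ) (hβlow : 1 / 2 < β) (hβhigh : β ≤ 1) (hB : 0 < B)
    (hreg2 : ∀ x ∈ closure Ω, ∀ y ∈ closure Ω, ∀ α ∈ A,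
      mnorm (σ x α - σ y α) ≤ B * ‖x - y‖ ^ β)
    (hirr : ∃ δ > (0 : ℝ), ∃ k > (0 : ℝ), ∃ γ : ℝ, γ < 2 * β - 1 ∧
      ∀ z ∈ frontier Ω, ∃ α₀ ∈ A, sigmaT (σ z α₀) (Dd z) = 0 ∧
        ∀ x ∈ Ω ∩ Metric.ball z δ,
          k * sdist Ω x ^ γ ≤
            ⟪b x α₀, Dd x⟫_ℝ + Matrix.trace (σ x α₀ * (σ x α₀)ᵀ * D2d x))
    :
    ∀ M : ℝ, 0 ≤ M → ∃ δ > (0 : ℝ), ∀ x ∈ Ω, sdist Ω x < δ →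
      M < sSup ((fun α =>
        ⟪b x α, Dd x⟫_ℝ / sdist Ω x
          + Matrix.trace (σ x α * (σ x α)ᵀ * D2d x) / sdist Ω x
          - (∑ i, sigmaT (σ x α) (Dd x) i ^ 2) / sdist Ω x ^ 2) '' A) := by
  intro M hM
  obtain ⟨x₀, hx₀⟩ := hΩconn.nonempty
  by_cases huniv : Ω = Set.univ
  · exfalso
    have h1 : (Ωᶜ : Set (EuclideanSpace ℝ (Fin n))) = ∅ := by rw [huniv]; simp
    have h2 : sdist Ω x₀ = 0 := by
      rw [sdist, h1, Metric.infDist_empty,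
        Metric.infDist_zero_of_mem (subset_closure hx₀), sub_zero]
    have h3 := hDdnorm x₀ (by rw [h2]; simpa using hδ₀)
    rcases Nat.eq_zero_or_pos n with hn | hn
    · subst hn
      have h4 : Dd x₀ = 0 := by ext i; exact i.elim0
      rw [h4, norm_zero] at h3
      norm_num at h3
    · rw [huniv] at hΩbdd
      obtain ⟨R, hR⟩ := hΩbdd.subset_closedBall 0
      have h0 := hR (Set.mem_univ (0 : EuclideanSpace ℝ (Fin n)))
      rw [Metric.mem_closedBall, dist_zero_right, norm_zero] at h0
      have hv := hR (Set.mem_univ (EuclideanSpace.single (⟨0, hn⟩ : Fin n) (R + 1)))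
      rw [Metric.mem_closedBall, dist_zero_right, EuclideanSpace.norm_single,
        Real.norm_eq_abs] at hv
      have := le_trans (le_abs_self (R + 1)) hv
      linarith
  · -- main case
    have hpre : PreconnectedSpace (EuclideanSpace ℝ (Fin n)) := inferInstance
    have hfr : (frontier Ω).Nonempty := nonempty_frontier_iff.mpr ⟨hΩconn.nonempty, huniv⟩
    have hcne : (Ωᶜ : Set (EuclideanSpace ℝ (Fin n))).Nonempty := Set.nonempty_compl.mpr huniv
    obtain ⟨Cb, hCb⟩ := hbBdd
    obtain ⟨C, hC⟩ := hσBdd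
    obtain ⟨α', hα'⟩ := hAne
    have hC0 : 0 ≤ C := le_trans (mnorm_nonneg' _) (hC x₀ (subset_closure hx₀) α' hα')
    obtain ⟨δ₁, hδ₁, k, hk, γ, hγ, hirr'⟩ := hirr
    -- a compact neighbourhood of the boundary
    set K : Set (EuclideanSpace ℝ (Fin n)) := {y | |sdist Ω y| ≤ δ₀ / 2} with hKdef
    have hKsub : K ⊆ {y | |sdist Ω y| < δ₀} := by
      intro y hy
      have h8 : |sdist Ω y| ≤ δ₀ / 2 := hy
      show |sdist Ω y| < δ₀
      linarith
    have hKclosed : IsClosed K :=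
      isClosed_le (continuous_sdist' Ω).abs continuous_const
    have hKbounded : Bornology.IsBounded K := by
      obtain ⟨R, hR⟩ := hΩbdd.closure.subset_closedBall x₀
      apply (Metric.isBounded_closedBall (x := x₀) (r := R + (δ₀ / 2 + 1))).subset
      intro y hy
      have h1 : Metric.infDist y (closure Ω) ≤ δ₀ / 2 := by
        by_cases hyc : y ∈ closure Ω
        · rw [Metric.infDist_zero_of_mem hyc]; positivity
        · have h2 : Metric.infDist y Ωᶜ = 0 :=
            Metric.infDist_zero_of_mem (fun hyy => hyc (subset_closure hyy))
          have h3 : |sdist Ω y| = Metric.infDist y (closure Ω) := by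
            rw [sdist, h2, zero_sub, abs_neg, abs_of_nonneg Metric.infDist_nonneg]
          rw [← h3]; exact hy
      obtain ⟨p, hp1, hp2⟩ := (Metric.infDist_lt_iff ⟨x₀, subset_closure hx₀⟩).mp
        (lt_of_le_of_lt h1 (by linarith : δ₀ / 2 < δ₀ / 2 + 1))
      rw [Metric.mem_closedBall]
      calc dist y x₀ ≤ dist y p + dist p x₀ := dist_triangle _ _ _
        _ ≤ (δ₀ / 2 + 1) + R := by
            have h4 := hR hp1
            rw [Metric.mem_closedBall] at h4
            exact add_le_add hp2.le h4
        _ = R + (δ₀ / 2 + 1) := by ring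
    have hKcompact : IsCompact K :=
      Metric.isCompact_of_isClosed_isBounded hKclosed hKbounded
    -- a bound for the second derivative on K
    set ℓ : Matrix (Fin n) (Fin n) ℝ →ₗ[ℝ]
        (EuclideanSpace ℝ (Fin n) →L[ℝ] EuclideanSpace ℝ (Fin n)) :=
      LinearMap.toContinuousLinearMap.toLinearMap.comp Matrix.toEuclideanLin.toLinearMap with hℓ
    have hℓcont : Continuous ℓ := ℓ.continuous_of_finiteDimensional
    have hfdcont : ContinuousOn (fun y => ℓ (D2d y)) K :=
      hℓcont.comp_continuousOn (hD2dCont.mono hKsub)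
    obtain ⟨L, hL⟩ := hKcompact.exists_bound_of_continuousOn hfdcont
    set L' := max L 0 with hL'def
    have hL'0 : 0 ≤ L' := le_max_right _ _
    -- the one-variable estimate
    obtain ⟨δ', hδ'pos, hδ'⟩ := onevar' k (2 * B ^ 2) (2 * (C * L') ^ 2 + M) (γ - 1)
      (2 * β - 1 - γ) hk (by positivity) (by positivity) (by linarith) (by linarith)
    refine ⟨min (min δ₁ (δ₀ / 2)) δ',
      lt_min (lt_min hδ₁ (half_pos hδ₀)) hδ'pos, ?_⟩
    intro x hx hxδ
    set d := sdist Ω x with hd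
    have hxcl : x ∈ closure Ω := subset_closure hx
    have hdinf : d = Metric.infDist x Ωᶜ := by
      rw [hd, sdist, Metric.infDist_zero_of_mem hxcl, sub_zero]
    have hd0 : 0 < d := by
      rw [hdinf]
      exact (hΩo.isClosed_compl.notMem_iff_infDist_pos hcne).mp (fun hh => hh hx)
    have hdlt1 : d < δ₁ := lt_of_lt_of_le hxδ (le_trans (min_le_left _ _) (min_le_left _ _))
    have hdlt0 : d < δ₀ / 2 :=
      lt_of_lt_of_le hxδ (le_trans (min_le_left _ _) (min_le_right _ _))
    have hdltδ' : d < δ' := lt_of_lt_of_le hxδ (min_le_right _ _)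
    -- projection onto the boundary
    have hfrcomp : IsCompact (frontier Ω) :=
      Metric.isCompact_of_isClosed_isBounded isClosed_frontier
        (hΩbdd.closure.subset frontier_subset_closure)
    obtain ⟨z, hzf, hzd⟩ := hfrcomp.exists_infDist_eq_dist hfr x
    have hxz : dist x z ≤ d := by
      rw [← hzd, hdinf]
      exact bdist_le_infDist_compl' hΩo hcne hx
    have hzcl : z ∈ closure Ω := frontier_subset_closure hzf
    obtain ⟨α₀, hα₀A, hzero, hdrift⟩ := hirr' z hzf
    have hdriftx := hdrift x ⟨hx, by rw [Metric.mem_ball]; exact lt_of_le_of_lt hxz hdlt1⟩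
    rw [← hd] at hdriftx
    -- Lipschitz bound for Dd near z
    have hball : Metric.closedBall z d ⊆ K := by
      intro y hy
      rw [Metric.mem_closedBall] at hy
      have h1 : Metric.infDist y (frontier Ω) ≤ d :=
        le_trans (Metric.infDist_le_dist_of_mem hzf) hy
      exact le_trans (le_trans (abs_sdist_le_bdist' hΩo hfr y) h1) hdlt0.le
    have hDdx : ‖Dd x‖ = 1 := hDdnorm x (by rw [← hd, abs_of_pos hd0]; linarith)
    have hmv : ‖Dd x - Dd z‖ ≤ L' * d := by
      have hconv : Convex ℝ (Metric.closedBall z d) := convex_closedBall _ _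
      have hderiv : ∀ y ∈ Metric.closedBall z d,
          HasFDerivWithinAt Dd (ℓ (D2d y)) (Metric.closedBall z d) y := fun y hy =>
        (hD2d y (hKsub (hball hy))).hasFDerivWithinAt
      have hbound : ∀ y ∈ Metric.closedBall z d, ‖ℓ (D2d y)‖ ≤ L' := fun y hy =>
        le_trans (hL y (hball hy)) (le_max_left _ _)
      have hxball : x ∈ Metric.closedBall z d := by rw [Metric.mem_closedBall]; exact hxz
      have hzball : z ∈ Metric.closedBall z d := Metric.mem_closedBall_self hd0.le
      have h5 := hconv.norm_image_sub_le_of_norm_hasFDerivWithin_le hderiv hbound hzball hxball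
      calc ‖Dd x - Dd z‖ ≤ L' * ‖x - z‖ := h5
        _ ≤ L' * d := by
            have h6 : ‖x - z‖ ≤ d := by rw [← dist_eq_norm]; exact hxz
            exact mul_le_mul_of_nonneg_left h6 hL'0
    -- bound on the diffusion term
    set σx := σ x α₀ with hσx
    set σz := σ z α₀ with hσz
    have hmnx : mnorm (σx - σz) ≤ B * d ^ β := by
      refine le_trans (hreg2 x hxcl z hzcl α₀ hα₀A) (mul_le_mul_of_nonneg_left ?_ hB.le)
      refine Real.rpow_le_rpow (norm_nonneg _) ?_ (by linarith)
      rw [← dist_eq_norm]; exact hxz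
    have hmnz : mnorm σz ≤ C := hC z hzcl α₀ hα₀A
    have hvj : ∀ j, sigmaT σx (Dd x) j =
        (∑ i, (σx i j - σz i j) * Dd x i) + ∑ i, σz i j * (Dd x i - Dd z i) := by
      intro j
      have h0 : ∑ i, σz i j * Dd z i = 0 := by
        have h7 := congrFun hzero j
        rw [sigmaT_apply'] at h7
        simpa using h7
      rw [sigmaT_apply']
      calc (∑ i, σx i j * Dd x i)
          = ∑ i, ((σx i j - σz i j) * Dd x i + σz i j * (Dd x i - Dd z i) + σz i j * Dd z i) :=
            Finset.sum_congr rfl (fun i _ => by ring)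
        _ = ((∑ i, (σx i j - σz i j) * Dd x i) + ∑ i, σz i j * (Dd x i - Dd z i))
              + ∑ i, σz i j * Dd z i := by
            rw [Finset.sum_add_distrib, Finset.sum_add_distrib]
        _ = _ := by rw [h0, add_zero]
    have hsum1 : ∑ j, (∑ i, (σx i j - σz i j) * Dd x i) ^ 2 ≤ (B * d ^ β) ^ 2 := by
      have h1 := sq_sum_bound' (σx - σz) (fun i => Dd x i)
      simp only [Matrix.sub_apply] at h1
      have h2 : ∑ i, Dd x i ^ 2 = 1 := by rw [euclid_sum_sq', hDdx, one_pow]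
      rw [h2, mul_one] at h1
      refine le_trans h1 ?_
      have h3 : ∑ i, ∑ j, (σx i j - σz i j) ^ 2 = mnorm (σx - σz) ^ 2 := by
        rw [mnorm_sq']
        simp [Matrix.sub_apply]
      rw [h3]
      exact pow_le_pow_left₀ (mnorm_nonneg' _) hmnx 2
    have hsum2 : ∑ j, (∑ i, σz i j * (Dd x i - Dd z i)) ^ 2 ≤ (C * (L' * d)) ^ 2 := by
      have h1 := sq_sum_bound' σz (fun i => Dd x i - Dd z i)
      have h2 : ∑ i, (Dd x i - Dd z i) ^ 2 = ‖Dd x - Dd z‖ ^ 2 := by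
        rw [← euclid_sum_sq' (Dd x - Dd z)]
        apply Finset.sum_congr rfl
        intro i _
        rw [PiLp.sub_apply]
      rw [h2] at h1
      refine le_trans h1 ?_
      have h3 : ∑ i, ∑ j, σz i j ^ 2 = mnorm σz ^ 2 := (mnorm_sq' σz).symm
      rw [h3]
      have h4 : mnorm σz ^ 2 ≤ C ^ 2 := pow_le_pow_left₀ (mnorm_nonneg' _) hmnz 2
      have h5 : ‖Dd x - Dd z‖ ^ 2 ≤ (L' * d) ^ 2 := pow_le_pow_left₀ (norm_nonneg _) hmv 2
      calc mnorm σz ^ 2 * ‖Dd x - Dd z‖ ^ 2 ≤ C ^ 2 * (L' * d) ^ 2 :=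
            mul_le_mul h4 h5 (sq_nonneg _) (by positivity)
        _ = (C * (L' * d)) ^ 2 := by ring
    have hS : ∑ j, sigmaT σx (Dd x) j ^ 2 ≤ 2 * (B * d ^ β) ^ 2 + 2 * (C * (L' * d)) ^ 2 := by
      calc ∑ j, sigmaT σx (Dd x) j ^ 2
          = ∑ j, ((∑ i, (σx i j - σz i j) * Dd x i) + ∑ i, σz i j * (Dd x i - Dd z i)) ^ 2 :=
            Finset.sum_congr rfl (fun j _ => by rw [hvj j])
        _ ≤ ∑ j, (2 * (∑ i, (σx i j - σz i j) * Dd x i) ^ 2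
              + 2 * (∑ i, σz i j * (Dd x i - Dd z i)) ^ 2) :=
            Finset.sum_le_sum fun j _ => sq_add_le' _ _
        _ = 2 * (∑ j, (∑ i, (σx i j - σz i j) * Dd x i) ^ 2)
              + 2 * ∑ j, (∑ i, σz i j * (Dd x i - Dd z i)) ^ 2 := by
            rw [Finset.sum_add_distrib, ← Finset.mul_sum, ← Finset.mul_sum]
        _ ≤ _ := by linarith
    -- rpow manipulations
    have hd2R : d ^ (2:ℝ) = d ^ (2:ℕ) := by
      rw [← Real.rpow_natCast d 2]; norm_num
    have hββ : (d ^ β) ^ (2:ℕ) = d ^ (2 * β) := by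
      rw [sq, ← Real.rpow_add hd0]; ring_nf
    have hPP : d ^ (2 * β - 2) * d ^ (2:ℕ) = d ^ (2 * β) := by
      rw [← hd2R, ← Real.rpow_add hd0]; ring_nf
    have hstep2 : (∑ j, sigmaT σx (Dd x) j ^ 2) / d ^ 2
        ≤ 2 * B ^ 2 * d ^ (2 * β - 2) + 2 * (C * L') ^ 2 := by
      have hnum : 2 * (B * d ^ β) ^ 2 + 2 * (C * (L' * d)) ^ 2
          = (2 * B ^ 2 * d ^ (2 * β - 2) + 2 * (C * L') ^ 2) * d ^ 2 := by
        calc 2 * (B * d ^ β) ^ 2 + 2 * (C * (L' * d)) ^ 2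
            = 2 * B ^ 2 * (d ^ β) ^ (2:ℕ) + 2 * (C * L') ^ 2 * d ^ 2 := by ring
          _ = 2 * B ^ 2 * (d ^ (2 * β - 2) * d ^ (2:ℕ)) + 2 * (C * L') ^ 2 * d ^ 2 := by
              rw [hββ, ← hPP]
          _ = _ := by ring
      rw [div_le_iff₀ (by positivity : (0:ℝ) < d ^ 2)]
      exact le_of_le_of_eq hS hnum
    have hstep1 : k * d ^ (γ - 1)
        ≤ ⟪b x α₀, Dd x⟫_ℝ / d + Matrix.trace (σx * σxᵀ * D2d x) / d := by
      have h1 : k * d ^ (γ - 1) = (k * d ^ γ) / d := by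
        rw [Real.rpow_sub hd0, Real.rpow_one]; ring
      rw [h1, ← add_div]
      exact div_le_div_of_nonneg_right hdriftx hd0.le
    have honevar := hδ' d hd0 hdltδ'
    rw [show (γ - 1) + (2 * β - 1 - γ) = 2 * β - 2 by ring] at honevar
    have hval : M < ⟪b x α₀, Dd x⟫_ℝ / d + Matrix.trace (σx * σxᵀ * D2d x) / d
        - (∑ i, sigmaT σx (Dd x) i ^ 2) / d ^ 2 := by linarith
    -- upper bound for the whole family, giving boundedness
    set T := ∑ p, ∑ q, |D2d x p q| with hTdef
    have hTb : ∀ i j, |D2d x i j| ≤ T := by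
      intro i j
      calc |D2d x i j| ≤ ∑ q, |D2d x i q| :=
            Finset.single_le_sum (f := fun q => |D2d x i q|)
              (fun q _ => abs_nonneg _) (Finset.mem_univ j)
        _ ≤ T := Finset.single_le_sum (f := fun p => ∑ q, |D2d x p q|)
            (fun p _ => Finset.sum_nonneg fun q _ => abs_nonneg _) (Finset.mem_univ i)
    have hBdd : BddAbove ((fun α =>
        ⟪b x α, Dd x⟫_ℝ / d + Matrix.trace (σ x α * (σ x α)ᵀ * D2d x) / d
          - (∑ i, sigmaT (σ x α) (Dd x) i ^ 2) / d ^ 2) '' A) := by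
      refine ⟨Cb / d + ((n * n * r : ℕ) * (C * C * T)) / d, ?_⟩
      rintro v ⟨α, hαA, rfl⟩
      have hin : ⟪b x α, Dd x⟫_ℝ ≤ Cb := by
        calc ⟪b x α, Dd x⟫_ℝ ≤ ‖b x α‖ * ‖Dd x‖ := real_inner_le_norm _ _
          _ = ‖b x α‖ := by rw [hDdx, mul_one]
          _ ≤ Cb := hCb x hxcl α hαA
      have htr : Matrix.trace (σ x α * (σ x α)ᵀ * D2d x) ≤ (n * n * r : ℕ) * (C * C * T) := by
        refine le_trans (le_abs_self _) (trace_bound' (σ x α) (D2d x)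
          (fun i l => le_trans (entry_le_mnorm' _ i l) (hC x hxcl α hαA)) hTb)
      have hSnn : 0 ≤ (∑ i, sigmaT (σ x α) (Dd x) i ^ 2) / d ^ 2 := by positivity
      have h1 : ⟪b x α, Dd x⟫_ℝ / d ≤ Cb / d := div_le_div_of_nonneg_right hin hd0.le
      have h2 : Matrix.trace (σ x α * (σ x α)ᵀ * D2d x) / d
          ≤ ((n * n * r : ℕ) * (C * C * T)) / d := div_le_div_of_nonneg_right htr hd0.le
      linarith
    exact lt_csSup_of_lt hBdd (Set.mem_image_of_mem _ hα₀A) hval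
end
end

section
/- Let Ω ⊂ ℝⁿ be a bounded connected open set whose signed distance function d is C² on a neighborhood of ∂Ω. Assume condition (reg2) (β-Hölder continuity of σ with β ∈ (1/2,1]) and condition (invariance). Then for every M ≥ 0 there exists δ > 0 such that for every x ∈ Ω_δ one has F[log d](x) < −M, i.e. inf_{α∈A} ( b(x,α)·Dd(x)/d(x) + tr(a(x,α)D²d(x))/d(x) − |σ(x,α)ᵀ Dd(x)|²/d(x)² ) > M. -/
open scoped InnerProductSpace Matrix
open Filter

noncomputable section

namespace SAux
open Metric

lemma norm_e {r : ℕ} (f : Fin r → ℝ) :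
    ‖(WithLp.equiv 2 (Fin r → ℝ)).symm f‖ = Real.sqrt (∑ i, f i ^ 2) := by
  simp [EuclideanSpace.norm_eq, WithLp.equiv_symm_apply, PiLp.toLp_apply, Real.norm_eq_abs, sq_abs]

lemma norm_mulVecT_le {n r : ℕ} (M : Matrix (Fin n) (Fin r) ℝ) (u : Fin n → ℝ) :
    ‖(WithLp.equiv 2 (Fin r → ℝ)).symm (Matrix.mulVec Mᵀ u)‖
      ≤ mnorm M * ‖(WithLp.equiv 2 (Fin n → ℝ)).symm u‖ := by
  rw [norm_e, norm_e, mnorm, ← Real.sqrt_mul (by positivity)]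
  apply Real.sqrt_le_sqrt
  calc ∑ j, Matrix.mulVec Mᵀ u j ^ 2 = ∑ j, (∑ i, M i j * u i) ^ 2 := by
        simp [Matrix.mulVec, Matrix.transpose_apply, dotProduct]
    _ ≤ ∑ j, (∑ i, M i j ^ 2) * (∑ i, u i ^ 2) :=
        Finset.sum_le_sum fun j _ => Finset.sum_mul_sq_le_sq_mul_sq _ _ _
    _ = (∑ i, ∑ j, M i j ^ 2) * ∑ i, u i ^ 2 := by
        rw [← Finset.sum_mul, Finset.sum_comm]

lemma sdist_lip {n : ℕ} (Ω : Set (EuclideanSpace ℝ (Fin n))) (x y : EuclideanSpace ℝ (Fin n)) :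
    |sdist Ω x - sdist Ω y| ≤ 2 * dist x y := by
  have h1 := (Metric.lipschitz_infDist_pt (Ωᶜ)).dist_le_mul x y
  have h2 := (Metric.lipschitz_infDist_pt (closure Ω)).dist_le_mul x y
  rw [Real.dist_eq] at h1 h2
  simp only [NNReal.coe_one, one_mul] at h1 h2
  rw [abs_le] at h1 h2 ⊢
  unfold sdist
  constructor <;> [linarith [h1.1, h2.2]; linarith [h1.2, h2.1]]

end SAux

set_option maxHeartbeats 2000000 in
theorem statement_3
    {n m r : ℕ} (Ω : Set (EuclideanSpace ℝ (Fin n)))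
    (hΩo : IsOpen Ω) (hΩconn : IsConnected Ω) (hΩbdd : Bornology.IsBounded Ω)
    (A : Set (Fin m → ℝ)) (hA : IsClosed A) (hAne : A.Nonempty)
    (b : EuclideanSpace ℝ (Fin n) → (Fin m → ℝ) → EuclideanSpace ℝ (Fin n))
    (σ : EuclideanSpace ℝ (Fin n) → (Fin m → ℝ) → Matrix (Fin n) (Fin r) ℝ)
    (hbBdd : ∃ C, ∀ x ∈ closure Ω, ∀ α ∈ A, ‖b x α‖ ≤ C)
    (hσBdd : ∃ C, ∀ x ∈ closure Ω, ∀ α ∈ A, mnorm (σ x α) ≤ C)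
    (hbCont : ContinuousOn (fun q : EuclideanSpace ℝ (Fin n) × (Fin m → ℝ) => b q.1 q.2)
      (closure Ω ×ˢ A))
    (hσCont : ContinuousOn (fun q : EuclideanSpace ℝ (Fin n) × (Fin m → ℝ) => σ q.1 q.2)
      (closure Ω ×ˢ A))
    (δ₀ : ℝ) (hδ₀ : 0 < δ₀)
    (Dd : EuclideanSpace ℝ (Fin n) → EuclideanSpace ℝ (Fin n))
    (D2d : EuclideanSpace ℝ (Fin n) → Matrix (Fin n) (Fin n) ℝ)
    (hDd : ∀ x, |sdist Ω x| < δ₀ → HasGradientAt (sdist Ω) (Dd x) x)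
    (hDdnorm : ∀ x, |sdist Ω x| < δ₀ → ‖Dd x‖ = 1)
    (hD2d : ∀ x, |sdist Ω x| < δ₀ →
      HasFDerivAt Dd (LinearMap.toContinuousLinearMap (Matrix.toEuclideanLin (D2d x))) x)
    (hD2dCont : ContinuousOn D2d {x | |sdist Ω x| < δ₀})
    (β B : ℝ) (hβlow : 1 / 2 < β) (hβhigh : β ≤ 1) (hB : 0 < B)
    (hreg2 : ∀ x ∈ closure Ω, ∀ y ∈ closure Ω, ∀ α ∈ A,
      mnorm (σ x α - σ y α) ≤ B * ‖x - y‖ ^ β)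
    (hinv : ∃ δ > (0 : ℝ), ∃ k > (0 : ℝ), ∃ γ : ℝ, γ < 2 * β - 1 ∧
      ∀ z ∈ frontier Ω, ∀ α ∈ A, sigmaT (σ z α) (Dd z) = 0 ∧
        ∀ x ∈ Ω, sdist Ω x < δ →
          k * sdist Ω x ^ γ ≤
            ⟪b x α, Dd x⟫_ℝ + Matrix.trace (σ x α * (σ x α)ᵀ * D2d x))
    :
    ∀ M : ℝ, 0 ≤ M → ∃ δ > (0 : ℝ), ∀ x ∈ Ω, sdist Ω x < δ →
      M < sInf ((fun α =>
        ⟪b x α, Dd x⟫_ℝ / sdist Ω x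
          + Matrix.trace (σ x α * (σ x α)ᵀ * D2d x) / sdist Ω x
          - (∑ i, sigmaT (σ x α) (Dd x) i ^ 2) / sdist Ω x ^ 2) '' A)  := by
  classical
  intro M hM
  obtain ⟨x₀, hx₀⟩ := hΩconn.nonempty
  by_cases hcne : (Ωᶜ : Set (EuclideanSpace ℝ (Fin n))).Nonempty
  swap
  · exfalso
    have hU : Ω = Set.univ := by
      have := Set.not_nonempty_iff_eq_empty.1 hcne
      simpa [Set.compl_empty_iff] using this
    have hcl : Metric.infDist x₀ (Set.univ : Set (EuclideanSpace ℝ (Fin n))) = 0 :=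
      Metric.infDist_zero_of_mem (Set.mem_univ x₀)
    have hsd : sdist Ω x₀ = 0 := by
      simp [sdist, hU, Metric.infDist_empty, hcl, closure_univ]
    have h1 : ‖Dd x₀‖ = 1 := hDdnorm x₀ (by rw [hsd]; simpa using hδ₀)
    obtain ⟨C, hC⟩ := isBounded_iff_forall_norm_le.1 (hU ▸ hΩbdd)
    have h2 := hC ((C + 1) • Dd x₀) (by simp [hU])
    have h3 := hC (Dd x₀) (by simp [hU])
    rw [norm_smul, h1, Real.norm_eq_abs, mul_one] at h2
    rw [h1] at h3
    rw [abs_of_nonneg (by linarith)] at h2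
    linarith
  have hΩc_closed : IsClosed (Ωᶜ : Set (EuclideanSpace ℝ (Fin n))) := hΩo.isClosed_compl
  have hsd_eq : ∀ x ∈ Ω, sdist Ω x = Metric.infDist x Ωᶜ := fun x hx => by
    simp [sdist, Metric.infDist_zero_of_mem (subset_closure hx)]
  have hsd_pos : ∀ x ∈ Ω, 0 < sdist Ω x := fun x hx => by
    rw [hsd_eq x hx]
    exact (hΩc_closed.notMem_iff_infDist_pos hcne).1 (Set.notMem_compl_iff.2 hx)
  have hfr : frontier Ω = closure Ω \ Ω := hΩo.frontier_eq
  have hsd_fr : ∀ z ∈ frontier Ω, sdist Ω z = 0 := fun z hz => by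
    rw [hfr] at hz
    have h1 : Metric.infDist z (closure Ω) = 0 := Metric.infDist_zero_of_mem hz.1
    have h2 : Metric.infDist z Ωᶜ = 0 := Metric.infDist_zero_of_mem hz.2
    simp [sdist, h1, h2]
  -- projection onto the frontier
  have hproj : ∀ x ∈ Ω, ∃ z ∈ frontier Ω, dist x z = sdist Ω x := by
    intro x hx
    obtain ⟨z, hzc, hzd⟩ := hΩc_closed.exists_infDist_eq_dist hcne x
    refine ⟨z, ?_, by rw [hsd_eq x hx, hzd]⟩
    rw [hfr]
    refine ⟨?_, hzc⟩
    have hdpos : 0 < dist x z := by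
      rw [← hzd, ← hsd_eq x hx]; exact hsd_pos x hx
    rw [Metric.mem_closure_iff]
    intro ε hε
    set s : ℝ := min (ε / (2 * dist x z)) 1 with hs
    have hs0 : 0 < s := lt_min (by positivity) one_pos
    refine ⟨z + s • (x - z), ?_, ?_⟩
    · by_contra hyc
      have hle : Metric.infDist x Ωᶜ ≤ dist x (z + s • (x - z)) :=
        Metric.infDist_le_dist_of_mem hyc
      have heq : dist x (z + s • (x - z)) = (1 - s) * dist x z := by
        rw [dist_eq_norm]
        have h' : x - (z + s • (x - z)) = (1 - s) • (x - z) := by module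
        rw [h', norm_smul, Real.norm_eq_abs,
          abs_of_nonneg (by linarith [min_le_right (ε / (2 * dist x z)) 1] : (0:ℝ) ≤ 1 - s),
          ← dist_eq_norm]
      rw [heq, hzd] at hle
      nlinarith
    · have heq : dist z (z + s • (x - z)) = s * dist x z := by
        rw [dist_eq_norm]
        have h' : z - (z + s • (x - z)) = (-s) • (x - z) := by module
        rw [h', norm_smul, Real.norm_eq_abs, abs_neg, abs_of_nonneg hs0.le, ← dist_eq_norm]
      rw [heq]
      calc s * dist x z ≤ (ε / (2 * dist x z)) * dist x z :=
            mul_le_mul_of_nonneg_right (min_le_left _ _) dist_nonneg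
        _ = ε / 2 := by field_simp
        _ < ε := by linarith
  have hfr_ne : (frontier Ω).Nonempty := by
    obtain ⟨z, hz, _⟩ := hproj x₀ hx₀; exact ⟨z, hz⟩
  have hfr_cpt : IsCompact (frontier Ω) :=
    Metric.isCompact_of_isClosed_isBounded isClosed_frontier
      (hΩbdd.closure.subset frontier_subset_closure)
  -- the compact collar K and the Lipschitz bound for Dd
  set K : Set (EuclideanSpace ℝ (Fin n)) :=
    {y | Metric.infDist y (frontier Ω) ≤ δ₀ / 4} with hKdef
  have hKcl : IsClosed K := isClosed_le (Metric.continuous_infDist_pt _) continuous_const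
  have hKbd : Bornology.IsBounded K := by
    obtain ⟨R, hR⟩ := isBounded_iff_forall_norm_le.1
      (hΩbdd.closure.subset frontier_subset_closure)
    rw [isBounded_iff_forall_norm_le]
    refine ⟨R + δ₀ / 4, fun y hy => ?_⟩
    obtain ⟨z, hz, hzd⟩ := hfr_cpt.exists_infDist_eq_dist hfr_ne y
    have h1 : ‖y‖ - ‖z‖ ≤ ‖y - z‖ := norm_sub_norm_le y z
    have h2 : ‖y - z‖ = dist y z := (dist_eq_norm y z).symm
    have h3 : dist y z ≤ δ₀ / 4 := by rw [← hzd]; exact hy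
    have h4 := hR z hz
    linarith
  have hKU : K ⊆ {x | |sdist Ω x| < δ₀} := fun y hy => by
    obtain ⟨z, hz, hzd⟩ := hfr_cpt.exists_infDist_eq_dist hfr_ne y
    have h2 := SAux.sdist_lip Ω y z
    rw [hsd_fr z hz, sub_zero] at h2
    have h3 : dist y z ≤ δ₀ / 4 := by rw [← hzd]; exact hy
    have h4 := abs_le.1 h2
    simp only [Set.mem_setOf_eq, abs_lt]
    constructor <;> nlinarith
  have hKcpt : IsCompact K := Metric.isCompact_of_isClosed_isBounded hKcl hKbd
  set φ : Matrix (Fin n) (Fin n) ℝ →ₗ[ℝ]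
      (EuclideanSpace ℝ (Fin n) →L[ℝ] EuclideanSpace ℝ (Fin n)) :=
    ((LinearMap.toContinuousLinearMap :
        (EuclideanSpace ℝ (Fin n) →ₗ[ℝ] EuclideanSpace ℝ (Fin n)) ≃ₗ[ℝ] _).toLinearMap.comp
      (Matrix.toEuclideanLin :
        Matrix (Fin n) (Fin n) ℝ ≃ₗ[ℝ] _).toLinearMap) with hφdef
  have hφapp : ∀ Mx : Matrix (Fin n) (Fin n) ℝ,
      φ Mx = LinearMap.toContinuousLinearMap (Matrix.toEuclideanLin Mx) := fun _ => rfl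
  have hφc : Continuous φ := φ.continuous_of_finiteDimensional
  obtain ⟨L₀, hL₀⟩ := hKcpt.exists_bound_of_continuousOn
    (hφc.comp_continuousOn (hD2dCont.mono hKU))
  set L : ℝ := max L₀ 0 with hLdef
  have hLnn : (0:ℝ) ≤ L := le_max_right _ _
  have hDdLip : ∀ x ∈ Ω, ∀ z ∈ frontier Ω, dist x z ≤ δ₀ / 4 →
      ‖Dd x - Dd z‖ ≤ L * dist x z := by
    intro x hx z hz hxz
    have hseg : segment ℝ z x ⊆ Metric.closedBall z (dist x z) := by
      apply (convex_closedBall z (dist x z)).segment_subset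
      · exact Metric.mem_closedBall.2 (by simp [dist_nonneg])
      · exact Metric.mem_closedBall.2 (by rw [dist_comm])
    have hsegK : segment ℝ z x ⊆ K := fun y hy => by
      have h1 := Metric.mem_closedBall.1 (hseg hy)
      exact le_trans (Metric.infDist_le_dist_of_mem hz) (le_trans h1 hxz)
    have key := Convex.norm_image_sub_le_of_norm_hasFDerivWithin_le
      (f := Dd) (f' := fun y => φ (D2d y)) (s := segment ℝ z x) (C := L) (𝕜 := ℝ)
      (fun y hy => by
        have h := (hD2d y (hKU (hsegK hy))).hasFDerivWithinAt (s := segment ℝ z x)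
        simpa only [hφapp] using h)
      (fun y hy => le_trans (hL₀ y (hsegK hy)) (le_max_left _ _))
      (convex_segment z x) (left_mem_segment ℝ z x) (right_mem_segment ℝ z x)
    calc ‖Dd x - Dd z‖ ≤ L * ‖x - z‖ := key
      _ = L * dist x z := by rw [dist_eq_norm]
  -- constants
  obtain ⟨C₀, hC₀⟩ := hσBdd
  set Cσ : ℝ := max C₀ 0 with hCσdef
  have hCσnn : (0:ℝ) ≤ Cσ := le_max_right _ _
  obtain ⟨δi, hδi, k, hk, γ, hγ, hinv'⟩ := hinv
  set E : ℝ := B + Cσ * L with hEdef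
  have hE0 : 0 < E := by positivity
  have hE2 : E ^ 2 ≠ 0 := by positivity
  set p : ℝ := 2 * β - 1 - γ with hpdef
  have hp0 : 0 < p := by rw [hpdef]; linarith
  set q : ℝ := 1 - γ with hqdef
  have hq0 : 0 < q := by rw [hqdef]; linarith
  set δA : ℝ := (k / (2 * E ^ 2)) ^ p⁻¹ with hδAdef
  set δB : ℝ := (k / (2 * (M + 1))) ^ q⁻¹ with hδBdef
  have hδA0 : 0 < δA := Real.rpow_pos_of_pos (by positivity) _
  have hδB0 : 0 < δB := Real.rpow_pos_of_pos (by positivity) _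
  refine ⟨min (min δi (δ₀ / 4)) (min 1 (min δA δB)), by positivity, ?_⟩
  intro x hx hxδ
  set d : ℝ := sdist Ω x with hddef
  have hd0 : 0 < d := hsd_pos x hx
  have hdδi : d < δi := lt_of_lt_of_le hxδ (le_trans (min_le_left _ _) (min_le_left _ _))
  have hdq : d ≤ δ₀ / 4 :=
    le_of_lt (lt_of_lt_of_le hxδ (le_trans (min_le_left _ _) (min_le_right _ _)))
  have hd1 : d ≤ 1 :=
    le_of_lt (lt_of_lt_of_le hxδ (le_trans (min_le_right _ _) (min_le_left _ _)))
  have hdA : d ≤ δA :=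
    le_of_lt (lt_of_lt_of_le hxδ
      (le_trans (min_le_right _ _) (le_trans (min_le_right _ _) (min_le_left _ _))))
  have hdB : d ≤ δB :=
    le_of_lt (lt_of_lt_of_le hxδ
      (le_trans (min_le_right _ _) (le_trans (min_le_right _ _) (min_le_right _ _))))
  obtain ⟨z, hzfr, hzd⟩ := hproj x hx
  have hxcl : x ∈ closure Ω := subset_closure hx
  have hzcl : z ∈ closure Ω := frontier_subset_closure hzfr
  have hDdx : ‖Dd x‖ = 1 := hDdnorm x (by
    rw [← hddef, abs_of_pos hd0]; linarith)
  have hDdsub : ‖Dd x - Dd z‖ ≤ L * d := by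
    have h := hDdLip x hx z hzfr (by rw [hzd]; exact hdq)
    rwa [hzd] at h
  -- reduce to a pointwise estimate for each control α
  apply lt_of_lt_of_le (show M < M + 1 by linarith)
  apply le_csInf (hAne.image _)
  rintro y ⟨α, hα, rfl⟩
  dsimp only
  have hdrift : k * d ^ γ ≤ ⟪b x α, Dd x⟫_ℝ + Matrix.trace (σ x α * (σ x α)ᵀ * D2d x) :=
    (hinv' z hzfr α hα).2 x hx hdδi
  -- bound the diffusion term
  have hSb : (∑ i, sigmaT (σ x α) (Dd x) i ^ 2) ≤ (E * d ^ β) ^ 2 := by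
    have h0 : Matrix.mulVec (σ z α)ᵀ (fun i => Dd z i) = 0 := (hinv' z hzfr α hα).1
    have hdecomp : sigmaT (σ x α) (Dd x)
        = Matrix.mulVec (σ x α - σ z α)ᵀ (fun i => Dd x i)
          + Matrix.mulVec (σ z α)ᵀ ((fun i => Dd x i) - (fun i => Dd z i)) := by
      simp only [sigmaT]
      rw [Matrix.transpose_sub, Matrix.sub_mulVec, Matrix.mulVec_sub, h0]
      abel
    have hsum : ∀ f : Fin r → ℝ,
        ∑ i, f i ^ 2 = ‖(WithLp.equiv 2 (Fin r → ℝ)).symm f‖ ^ 2 := fun f => by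
      rw [SAux.norm_e, Real.sq_sqrt (Finset.sum_nonneg fun i _ => sq_nonneg _)]
    rw [hsum, hdecomp, show ∀ a b : Fin r → ℝ, (WithLp.equiv 2 (Fin r → ℝ)).symm (a + b) = (WithLp.equiv 2 (Fin r → ℝ)).symm a + (WithLp.equiv 2 (Fin r → ℝ)).symm b from fun _ _ => rfl]
    have hb1 : ‖(WithLp.equiv 2 (Fin r → ℝ)).symm
        (Matrix.mulVec (σ x α - σ z α)ᵀ (fun i => Dd x i))‖ ≤ B * d ^ β := by
      refine le_trans (SAux.norm_mulVecT_le _ _) ?_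
      have he1 : ‖(WithLp.equiv 2 (Fin n → ℝ)).symm (fun i => Dd x i)‖ = ‖Dd x‖ := by
        rw [SAux.norm_e, EuclideanSpace.norm_eq]
        simp [Real.norm_eq_abs, sq_abs]
      rw [he1, hDdx, mul_one]
      have hxz : ‖x - z‖ = d := by rw [← dist_eq_norm, hzd]
      have h := hreg2 x hxcl z hzcl α hα
      rwa [hxz] at h
    have hb2 : ‖(WithLp.equiv 2 (Fin r → ℝ)).symm
        (Matrix.mulVec (σ z α)ᵀ ((fun i => Dd x i) - (fun i => Dd z i)))‖
          ≤ Cσ * (L * d) := by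
      refine le_trans (SAux.norm_mulVecT_le _ _) ?_
      have he2 : ‖(WithLp.equiv 2 (Fin n → ℝ)).symm
          ((fun i => Dd x i) - (fun i => Dd z i))‖ = ‖Dd x - Dd z‖ := by
        rw [SAux.norm_e, EuclideanSpace.norm_eq]
        simp [Real.norm_eq_abs, sq_abs, Pi.sub_apply]
      rw [he2]
      exact mul_le_mul (le_trans (hC₀ z hzcl α hα) (le_max_left _ _)) hDdsub
        (norm_nonneg _) hCσnn
    have htot : ‖(WithLp.equiv 2 (Fin r → ℝ)).symm
            (Matrix.mulVec (σ x α - σ z α)ᵀ (fun i => Dd x i))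
          + (WithLp.equiv 2 (Fin r → ℝ)).symm
            (Matrix.mulVec (σ z α)ᵀ ((fun i => Dd x i) - (fun i => Dd z i)))‖
        ≤ E * d ^ β := by
      refine le_trans (norm_add_le _ _) (le_trans (add_le_add hb1 hb2) ?_)
      have hdβ : d ≤ d ^ β := by
        nth_rewrite 1 [← Real.rpow_one d]
        exact Real.rpow_le_rpow_of_exponent_ge hd0 hd1 hβhigh
      have h5 : Cσ * (L * d) ≤ Cσ * L * d ^ β := by
        rw [mul_assoc]
        exact mul_le_mul_of_nonneg_left (mul_le_mul_of_nonneg_left hdβ hLnn) hCσnn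
      rw [hEdef]; nlinarith [Real.rpow_nonneg hd0.le β]
    exact pow_le_pow_left₀ (norm_nonneg _) htot 2
  -- rpow estimates coming from the choice of δ
  have hdB' : d ^ q ≤ k / (2 * (M + 1)) := by
    have h1 : d ^ q ≤ δB ^ q := Real.rpow_le_rpow hd0.le hdB hq0.le
    rwa [hδBdef, Real.rpow_inv_rpow (by positivity) hq0.ne'] at h1
  have hdA' : d ^ p ≤ k / (2 * E ^ 2) := by
    have h1 : d ^ p ≤ δA ^ p := Real.rpow_le_rpow hd0.le hdA hp0.le
    rwa [hδAdef, Real.rpow_inv_rpow (by positivity) hp0.ne'] at h1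
  have hS2 : (∑ i, sigmaT (σ x α) (Dd x) i ^ 2) / d ^ 2 ≤ (E * d ^ β) ^ 2 / d ^ 2 :=
    (div_le_div_iff_of_pos_right (by positivity)).2 hSb
  have hdrift2 : k * d ^ γ / d
      ≤ ⟪b x α, Dd x⟫_ℝ / d + Matrix.trace (σ x α * (σ x α)ᵀ * D2d x) / d := by
    rw [← add_div]
    exact (div_le_div_iff_of_pos_right hd0).2 hdrift
  have e1 : (E * d ^ β) ^ 2 / d ^ 2 ≤ k / 2 * d ^ γ / d := by
    rw [div_le_div_iff₀ (by positivity) hd0]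
    have hA1 : (d ^ β) ^ (2:ℕ) * d = d ^ (β * 2 + 1) := by
      rw [Real.rpow_add_one hd0.ne', ← Real.rpow_natCast (d ^ β) 2,
        ← Real.rpow_mul hd0.le]
      norm_num
    have hsplit : d ^ (β * 2 + 1) = d ^ p * (d ^ γ * d ^ (2:ℕ)) := by
      rw [← Real.rpow_natCast d 2, ← Real.rpow_add hd0, ← Real.rpow_add hd0]
      congr 1
      rw [hpdef]; push_cast; ring
    calc (E * d ^ β) ^ 2 * d = E ^ 2 * ((d ^ β) ^ (2:ℕ) * d) := by ring
      _ = E ^ 2 * (d ^ p * (d ^ γ * d ^ (2:ℕ))) := by rw [hA1, hsplit]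
      _ ≤ E ^ 2 * ((k / (2 * E ^ 2)) * (d ^ γ * d ^ (2:ℕ))) := by
          refine mul_le_mul_of_nonneg_left
            (mul_le_mul_of_nonneg_right hdA' (by positivity)) (by positivity)
      _ = k / 2 * d ^ γ * d ^ 2 := by field_simp
  have e2 : M + 1 ≤ k / 2 * d ^ γ / d := by
    have h1 : k / 2 * d ^ γ / d = k / 2 * d ^ (γ - 1) := by
      rw [Real.rpow_sub hd0, Real.rpow_one]; ring
    rw [h1]
    have h2 : d ^ (γ - 1) = (d ^ q)⁻¹ := by
      rw [← Real.rpow_neg hd0.le]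
      congr 1; rw [hqdef]; ring
    rw [h2]
    have h3 : (k / (2 * (M + 1)))⁻¹ ≤ (d ^ q)⁻¹ :=
      inv_anti₀ (Real.rpow_pos_of_pos hd0 q) hdB'
    have h4 : (k / (2 * (M + 1)))⁻¹ = 2 * (M + 1) / k := inv_div _ _
    calc M + 1 = k / 2 * (2 * (M + 1) / k) := by field_simp
      _ ≤ k / 2 * (d ^ q)⁻¹ :=
          mul_le_mul_of_nonneg_left (h4 ▸ h3) (by positivity)
  have hhalf : k / 2 * d ^ γ / d + k / 2 * d ^ γ / d = k * d ^ γ / d := by ring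
  linarith [hS2.trans e1, hdrift2, e2, hhalf]
end
end

section
/- Let Ω ⊂ ℝⁿ be a bounded open set, d(x) := dist(x, ∂Ω) for x ∈ Ω, and let σ : cl Ω × A → M_{n×r}(ℝ) satisfy condition (reg2) with constants β ∈ (1/2,1] and B > 0. Let U ⊆ ℝⁿ be open and ᾱ ∈ A be such that σ(z,ᾱ)ᵀ ν = 0 for every z ∈ ∂Ω ∩ U and every ν ∈ N(z). Then for every x ∈ Ω ∩ U with P(x) ⊆ U and every p ∈ D⁺d(x), one has |σ(x,ᾱ)ᵀ p| ≤ B d(x)^β. -/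
open scoped InnerProductSpace Matrix
open Filter

noncomputable section

lemma sum_le_sqrt_mul_sqrt {k : ℕ} (f g : Fin k → ℝ) :
    ∑ j, f j * g j ≤ Real.sqrt (∑ j, f j ^ 2) * Real.sqrt (∑ j, g j ^ 2) := by
  have h := Finset.sum_mul_sq_le_sq_mul_sq Finset.univ f g
  calc ∑ j, f j * g j ≤ |∑ j, f j * g j| := le_abs_self _
    _ = Real.sqrt ((∑ j, f j * g j) ^ 2) := (Real.sqrt_sq_eq_abs _).symm
    _ ≤ Real.sqrt ((∑ j, f j ^ 2) * ∑ j, g j ^ 2) := Real.sqrt_le_sqrt h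
    _ = _ := Real.sqrt_mul (by positivity) _

lemma normAux {n : ℕ} (ν h : EuclideanSpace ℝ (Fin n)) (a : ℝ) (ha : 0 < a)
    (hν : ‖ν‖ = 1) (hh : ‖h‖ ≤ a) :
    ‖a • ν + h‖ ≤ a + ⟪h, ν⟫_ℝ + ‖h‖ ^ 2 / (2 * a) := by
  have hcs : |⟪h, ν⟫_ℝ| ≤ ‖h‖ := by
    have := abs_real_inner_le_norm h ν; rwa [hν, mul_one] at this
  have hsm : ‖a • ν‖ = a := by
    rw [norm_smul, hν, mul_one, Real.norm_eq_abs, abs_of_pos ha]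
  have hip : ⟪a • ν, h⟫_ℝ = a * ⟪h, ν⟫_ℝ := by
    rw [real_inner_smul_left, real_inner_comm]
  have hexp : ‖a • ν + h‖ ^ 2 = a ^ 2 + 2 * (a * ⟪h, ν⟫_ℝ) + ‖h‖ ^ 2 := by
    rw [norm_add_sq_real, hsm, hip]
  set c := ⟪h, ν⟫_ℝ with hc
  set D := ‖h‖ ^ 2 / (2 * a) with hD
  have hDa : ‖h‖ ^ 2 = D * (2 * a) := by rw [hD, div_mul_cancel₀ _ (by positivity)]
  have habs := abs_le.mp hcs
  have h1 : 0 ≤ a + c + D := by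
    have : 0 ≤ D := by positivity
    linarith
  have h2 : ‖a • ν + h‖ ^ 2 ≤ (a + c + D) ^ 2 := by nlinarith [sq_nonneg (c + D)]
  nlinarith [norm_nonneg (a • ν + h)]

set_option maxHeartbeats 1000000 in
theorem statement_6
    {n m r : ℕ} (Ω : Set (EuclideanSpace ℝ (Fin n)))
    (hΩo : IsOpen Ω) (hΩbdd : Bornology.IsBounded Ω) (hΩne : Ω.Nonempty)
    (A : Set (Fin m → ℝ)) (hA : IsClosed A) (hAne : A.Nonempty)
    (σ : EuclideanSpace ℝ (Fin n) → (Fin m → ℝ) → Matrix (Fin n) (Fin r) ℝ)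
    (hσBdd : ∃ C, ∀ x ∈ closure Ω, ∀ α ∈ A, mnorm (σ x α) ≤ C)
    (hσCont : ContinuousOn (fun q : EuclideanSpace ℝ (Fin n) × (Fin m → ℝ) => σ q.1 q.2)
      (closure Ω ×ˢ A))
    (β B : ℝ) (hβlow : 1 / 2 < β) (hβhigh : β ≤ 1) (hB : 0 < B)
    (hreg2 : ∀ x ∈ closure Ω, ∀ y ∈ closure Ω, ∀ α ∈ A,
      mnorm (σ x α - σ y α) ≤ B * ‖x - y‖ ^ β)
    (U : Set (EuclideanSpace ℝ (Fin n))) (hU : IsOpen U)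
    (α₀ : Fin m → ℝ) (hα₀ : α₀ ∈ A)
    (hperp : ∀ z ∈ frontier Ω ∩ U, ∀ ν ∈ normalDirs Ω z, sigmaT (σ z α₀) ν = 0)
    (x : EuclideanSpace ℝ (Fin n)) (hx : x ∈ Ω ∩ U) (hproj : projSet Ω x ⊆ U)
    (p : EuclideanSpace ℝ (Fin n)) (hp : p ∈ D1plus (closure Ω) (bdist Ω) x) :
    Real.sqrt (∑ i, sigmaT (σ x α₀) p i ^ 2) ≤ B * bdist Ω x ^ β := by
  classical
  obtain ⟨hxΩ, hxU⟩ := hx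
  have hβ0 : (0:ℝ) < β := lt_trans (by norm_num) hβlow
  set w : Fin r → ℝ := sigmaT (σ x α₀) p with hw
  have hwj : ∀ j, w j = ∑ i, σ x α₀ i j * p i := by
    intro j
    simp [hw, sigmaT, Matrix.mulVec, dotProduct, Matrix.transpose_apply]
  by_cases hw0 : ∑ j, w j ^ 2 = 0
  · rw [hw0, Real.sqrt_zero]
    exact mul_nonneg hB.le (Real.rpow_nonneg Metric.infDist_nonneg β)
  have hL2pos : 0 < ∑ j, w j ^ 2 := lt_of_le_of_ne (by positivity) (Ne.symm hw0)
  set L := Real.sqrt (∑ j, w j ^ 2) with hLdef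
  have hLpos : 0 < L := Real.sqrt_pos.mpr hL2pos
  have hLsq : L ^ 2 = ∑ j, w j ^ 2 := Real.sq_sqrt hL2pos.le
  have hnne : Nonempty (Fin n) := by
    by_contra hne
    have hie : IsEmpty (Fin n) := not_nonempty_iff.mp hne
    apply hw0
    refine Finset.sum_eq_zero fun j _ => ?_
    rw [hwj j]
    simp
  -- frontier compact and nonempty
  have hclosBdd : Bornology.IsBounded (closure Ω) := hΩbdd.closure
  have hfroClosed : IsClosed (frontier Ω) := isClosed_frontier
  have hfroCompact : IsCompact (frontier Ω) :=
    Metric.isCompact_of_isClosed_isBounded hfroClosed (hclosBdd.subset frontier_subset_closure)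
  have hfroNe : (frontier Ω).Nonempty := by
    rw [Set.nonempty_iff_ne_empty]
    intro hfe
    have hclopen : IsClopen Ω := isClopen_iff_frontier_eq_empty.mpr hfe
    rcases isClopen_iff.mp hclopen with h | h
    · exact hΩne.ne_empty h
    · rw [h] at hΩbdd
      obtain ⟨C, hC⟩ := isBounded_iff_forall_norm_le.mp hΩbdd
      obtain ⟨i⟩ := hnne
      have h1 := hC (EuclideanSpace.single i (|C| + 1)) (Set.mem_univ _)
      rw [EuclideanSpace.norm_single] at h1
      have h2 : |(|C| + 1)| = |C| + 1 := abs_of_pos (by positivity)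
      rw [Real.norm_eq_abs, h2] at h1
      linarith [le_abs_self C]
  set d := bdist Ω x with hd
  have hxnotfro : x ∉ frontier Ω := by
    rw [hΩo.frontier_eq]; exact fun hmem => hmem.2 hxΩ
  have hdpos : 0 < d := by
    rw [hd, bdist]
    exact (hfroClosed.notMem_iff_infDist_pos hfroNe).mp hxnotfro
  -- the direction q = σ(x,α₀) w
  set q : EuclideanSpace ℝ (Fin n) :=
    (WithLp.equiv 2 (Fin n → ℝ)).symm (fun i => ∑ j, σ x α₀ i j * w j) with hqdef
  have hqi : ∀ i, q i = ∑ j, σ x α₀ i j * w j := fun i => rfl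
  have hinnerq : ∀ v : EuclideanSpace ℝ (Fin n),
      ⟪q, v⟫_ℝ = ∑ j, w j * (∑ i, σ x α₀ i j * v i) := by
    intro v
    rw [PiLp.inner_apply]
    simp only [RCLike.inner_apply, conj_trivial]
    calc ∑ i, v i * q i = ∑ i, ∑ j, w j * (σ x α₀ i j * v i) := by
          refine Finset.sum_congr rfl fun i _ => ?_
          rw [hqi i, Finset.mul_sum]
          exact Finset.sum_congr rfl fun j _ => by ring
      _ = ∑ j, ∑ i, w j * (σ x α₀ i j * v i) := Finset.sum_comm
      _ = ∑ j, w j * ∑ i, σ x α₀ i j * v i := by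
          exact Finset.sum_congr rfl fun j _ => (Finset.mul_sum _ _ _).symm
  have hpq : ⟪p, q⟫_ℝ = ∑ j, w j ^ 2 := by
    rw [real_inner_comm, hinnerq p]
    refine Finset.sum_congr rfl fun j _ => ?_
    rw [← hwj j]; ring
  have hqpos : 0 < ‖q‖ := by
    rw [norm_pos_iff]
    intro h0
    rw [h0, inner_zero_right] at hpq
    exact hw0 hpq.symm
  -- key perpendicularity estimate
  have hkey : ∀ z ∈ frontier Ω, z ∈ U → ∀ ν ∈ normalDirs Ω z,
      ⟪q, ν⟫_ℝ ≤ L * (B * ‖x - z‖ ^ β) := by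
    intro z hzf hzU ν hνmem
    have h0 : sigmaT (σ z α₀) ν = 0 := hperp z ⟨hzf, hzU⟩ ν hνmem
    have h0j : ∀ j, ∑ i, σ z α₀ i j * ν i = 0 := by
      intro j
      have := congrFun h0 j
      simpa [sigmaT, Matrix.mulVec, dotProduct, Matrix.transpose_apply] using this
    have hν1 : ∑ i, ν i ^ 2 = 1 := by
      have hn := hνmem.1
      rw [EuclideanSpace.norm_eq] at hn
      have h2 := congrArg (fun t : ℝ => t ^ 2) hn
      simp only [one_pow] at h2
      rw [Real.sq_sqrt (by positivity : (0:ℝ) ≤ ∑ i, ‖ν i‖ ^ 2)] at h2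
      simpa [Real.norm_eq_abs, sq_abs] using h2
    set M : Matrix (Fin n) (Fin r) ℝ := σ x α₀ - σ z α₀ with hM
    have hqν : ⟪q, ν⟫_ℝ = ∑ j, w j * (∑ i, M i j * ν i) := by
      rw [hinnerq ν]
      refine Finset.sum_congr rfl fun j _ => ?_
      congr 1
      have hMs : ∑ i, M i j * ν i
          = (∑ i, σ x α₀ i j * ν i) - ∑ i, σ z α₀ i j * ν i := by
        rw [← Finset.sum_sub_distrib]
        refine Finset.sum_congr rfl fun i _ => ?_
        rw [hM]; simp [Matrix.sub_apply]; ring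
      rw [hMs, h0j j, sub_zero]
    have hcs : ∑ j, w j * (∑ i, M i j * ν i)
        ≤ L * Real.sqrt (∑ j, (∑ i, M i j * ν i) ^ 2) :=
      sum_le_sqrt_mul_sqrt w _
    have hcol : ∑ j, (∑ i, M i j * ν i) ^ 2 ≤ ∑ i, ∑ j, M i j ^ 2 := by
      calc ∑ j, (∑ i, M i j * ν i) ^ 2
          ≤ ∑ j, ((∑ i, M i j ^ 2) * ∑ i, ν i ^ 2) :=
            Finset.sum_le_sum fun j _ => Finset.sum_mul_sq_le_sq_mul_sq _ _ _
        _ = ∑ j, ∑ i, M i j ^ 2 := by simp [hν1]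
        _ = ∑ i, ∑ j, M i j ^ 2 := Finset.sum_comm
    have hsqrt : Real.sqrt (∑ j, (∑ i, M i j * ν i) ^ 2) ≤ mnorm M := by
      rw [mnorm]
      exact Real.sqrt_le_sqrt hcol
    have hreg := hreg2 x (subset_closure hxΩ) z (frontier_subset_closure hzf) α₀ hα₀
    calc ⟪q, ν⟫_ℝ = ∑ j, w j * (∑ i, M i j * ν i) := hqν
      _ ≤ L * Real.sqrt (∑ j, (∑ i, M i j * ν i) ^ 2) := hcs
      _ ≤ L * mnorm M := mul_le_mul_of_nonneg_left hsqrt hLpos.le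
      _ ≤ L * (B * ‖x - z‖ ^ β) := mul_le_mul_of_nonneg_left hreg hLpos.le
  -- points of the frontier near the distance to x are in U
  have hη : ∃ η > 0, ∀ z ∈ frontier Ω, ‖x - z‖ < d + η → z ∈ U := by
    rcases Set.eq_empty_or_nonempty (frontier Ω \ U) with hK | hK
    · exact ⟨1, one_pos, fun z hz _ => by
        by_contra hzU
        exact (Set.eq_empty_iff_forall_notMem.mp hK z) ⟨hz, hzU⟩⟩
    · have hKcl : IsClosed (frontier Ω \ U) := hfroClosed.sdiff hU
      have hKcp : IsCompact (frontier Ω \ U) :=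
        hfroCompact.of_isClosed_subset hKcl Set.diff_subset
      obtain ⟨z₀, hz₀K, hz₀d⟩ := hKcp.exists_infDist_eq_dist hK x
      have h1 : d ≤ dist x z₀ := Metric.infDist_le_dist_of_mem hz₀K.1
      have h2 : d ≠ dist x z₀ := by
        intro heq
        have : z₀ ∈ projSet Ω x := ⟨hz₀K.1, heq.symm⟩
        exact hz₀K.2 (hproj this)
      refine ⟨dist x z₀ - d, by cases lt_or_eq_of_le h1 with
        | inl h => linarith
        | inr h => exact absurd h h2, fun z hz hlt => ?_⟩
      by_contra hzU
      have hzK : z ∈ frontier Ω \ U := ⟨hz, hzU⟩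
      have h3 := Metric.infDist_le_dist_of_mem (x := x) hzK
      rw [dist_eq_norm] at h3
      linarith only [h3, hlt, hz₀d]
  have main : ∀ ε > 0, L ^ 2 ≤ L * (B * d ^ β) + ε := by
    intro ε hε
    obtain ⟨η, hηpos, hηprop⟩ := hη
    set ε' := ε / (4 * (‖q‖ + 1)) with hε'def
    have hε'pos : 0 < ε' := by positivity
    have hsup := hp ε' hε'pos
    rw [Filter.eventually_iff, Metric.mem_nhdsWithin_iff] at hsup
    obtain ⟨δ, hδpos, hδ⟩ := hsup
    obtain ⟨ρ, hρpos, hρ⟩ := Metric.isOpen_iff.mp hΩo x hxΩ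
    have hcont : ContinuousAt (fun t : ℝ => L * (B * t ^ β)) d :=
      continuousAt_const.mul (continuousAt_const.mul
        (Real.continuousAt_rpow_const d β (Or.inl hdpos.ne')))
    obtain ⟨δ₂, hδ₂pos, hδ₂⟩ := Metric.continuousAt_iff.mp hcont (ε/4) (by positivity)
    set c := min ρ (min (d/2) (min (η/2) (min δ (δ₂/2)))) with hcdef
    have hcpos : 0 < c :=
      lt_min hρpos (lt_min (by linarith) (lt_min (by linarith) (lt_min hδpos (by linarith))))
    have hc1 : c ≤ ρ := min_le_left _ _
    have hcr := min_le_right ρ (min (d/2) (min (η/2) (min δ (δ₂/2))))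
    have hc2 : c ≤ d/2 := hcr.trans (min_le_left _ _)
    have hcr2 := hcr.trans (min_le_right (d/2) (min (η/2) (min δ (δ₂/2))))
    have hc3 : c ≤ η/2 := hcr2.trans (min_le_left _ _)
    have hcr3 := hcr2.trans (min_le_right (η/2) (min δ (δ₂/2)))
    have hc4 : c ≤ δ := hcr3.trans (min_le_left _ _)
    have hc5 : c ≤ δ₂/2 := hcr3.trans (min_le_right _ _)
    set s := min (ε * d / (4 * ‖q‖ ^ 2)) (c / (2 * ‖q‖)) with hsdef
    have hspos : 0 < s := lt_min (by positivity) (by positivity)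
    have hsQc : s * ‖q‖ ≤ c / 2 := by
      have hs2 : s ≤ c / (2 * ‖q‖) := min_le_right _ _
      have := mul_le_mul_of_nonneg_right hs2 (norm_nonneg q)
      calc s * ‖q‖ ≤ c / (2 * ‖q‖) * ‖q‖ := this
        _ = c / 2 := by field_simp
    have hsq6 : s * ‖q‖ ^ 2 / d ≤ ε / 4 := by
      have hs1 : s ≤ ε * d / (4 * ‖q‖ ^ 2) := min_le_left _ _
      rw [div_le_iff₀ hdpos]
      have h4 : ε * d / (4 * ‖q‖ ^ 2) * ‖q‖ ^ 2 = ε / 4 * d := by field_simp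
      have h5 := mul_le_mul_of_nonneg_right hs1 (sq_nonneg ‖q‖)
      linarith only [h4, h5]
    have hA1 : s * ‖q‖ < ρ := by linarith only [hsQc, hc1, hcpos]
    have hA2 : s * ‖q‖ ≤ d / 2 := by linarith only [hsQc, hc2, hdpos]
    have hA3 : 2 * (s * ‖q‖) < η := by linarith only [hsQc, hc3, hηpos]
    have hA4 : s * ‖q‖ < δ := by linarith only [hsQc, hc4, hδpos]
    have hA5 : 2 * (s * ‖q‖) < δ₂ := by linarith only [hsQc, hc5, hδ₂pos]
    set y : EuclideanSpace ℝ (Fin n) := x - s • q with hy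
    have hyx : x - y = s • q := by rw [hy]; abel
    have hyx2 : y - x = -(s • q) := by rw [hy]; abel
    have hsmul_norm : ‖s • q‖ = s * ‖q‖ := by
      rw [norm_smul, Real.norm_eq_abs, abs_of_pos hspos]
    have hdistxy : dist x y = s * ‖q‖ := by rw [dist_eq_norm, hyx, hsmul_norm]
    have hyΩ : y ∈ Ω := hρ (by rw [Metric.mem_ball, dist_comm, hdistxy]; exact hA1)
    set dy := bdist Ω y with hdy
    have hlip1 : d ≤ dy + s * ‖q‖ := by
      have h6 := Metric.infDist_le_infDist_add_dist (x := x) (y := y) (s := frontier Ω)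
      rw [hdistxy] at h6
      exact h6
    have hlip2 : dy ≤ d + s * ‖q‖ := by
      have h6 := Metric.infDist_le_infDist_add_dist (x := y) (y := x) (s := frontier Ω)
      rw [dist_comm, hdistxy] at h6
      exact h6
    have hdyhalf : d / 2 ≤ dy := by linarith only [hlip1, hA2]
    have hdypos : 0 < dy := by linarith only [hdyhalf, hdpos]
    obtain ⟨z, hzf, hzd⟩ := hfroCompact.exists_infDist_eq_dist hfroNe y
    have hdyz : dy = ‖y - z‖ := by rw [hdy, bdist, hzd, dist_eq_norm]
    set ν : EuclideanSpace ℝ (Fin n) := dy⁻¹ • (y - z) with hνdef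
    have hν1 : ‖ν‖ = 1 := by
      rw [hνdef, norm_smul, Real.norm_eq_abs, abs_of_pos (inv_pos.mpr hdypos), ← hdyz,
        inv_mul_cancel₀ hdypos.ne']
    have hdyν : dy • ν = y - z := by
      rw [hνdef, smul_smul, mul_inv_cancel₀ hdypos.ne', one_smul]
    have hνmem : ν ∈ normalDirs Ω z := by
      refine ⟨hν1, y, hyΩ, ?_⟩
      rw [← hdy, hdyν]
      abel
    have hxzeq : x - z = dy • ν + s • q := by rw [hdyν, ← hyx]; abel
    have hxznorm : ‖x - z‖ ≤ d + 2 * (s * ‖q‖) := by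
      have h3 := dist_triangle x y z
      rw [dist_eq_norm, dist_eq_norm, dist_eq_norm] at h3
      rw [← hdyz] at h3
      have h7 : ‖x - y‖ = s * ‖q‖ := by rw [hyx, hsmul_norm]
      rw [h7] at h3
      linarith only [h3, hlip2]
    have hdxz : d ≤ ‖x - z‖ := by
      have h8 := Metric.infDist_le_dist_of_mem hzf (x := x)
      rw [dist_eq_norm] at h8
      exact h8
    have hzU : z ∈ U := hηprop z hzf (by linarith only [hxznorm, hA3])
    have hE1 : ‖x - z‖ ≤ dy + ⟪s • q, ν⟫_ℝ + (s * ‖q‖) ^ 2 / (2 * dy) := by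
      rw [hxzeq]
      have h9 := normAux ν (s • q) dy hdypos hν1 (by rw [hsmul_norm]; linarith only [hA2, hdyhalf])
      rwa [hsmul_norm] at h9
    have hipsq : ⟪s • q, ν⟫_ℝ = s * ⟪q, ν⟫_ℝ := real_inner_smul_left q ν s
    have hyball : y ∈ Metric.ball x δ ∩ closure Ω :=
      ⟨by rw [Metric.mem_ball, dist_comm, hdistxy]; exact hA4, subset_closure hyΩ⟩
    have hsupy : bdist Ω y - bdist Ω x - ⟪p, y - x⟫_ℝ ≤ ε' * ‖y - x‖ := hδ hyball
    rw [← hdy, ← hd] at hsupy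
    have hipyx : ⟪p, y - x⟫_ℝ = -(s * (∑ j, w j ^ 2)) := by
      rw [hyx2, inner_neg_right, real_inner_smul_right, hpq]
    have hnyx : ‖y - x‖ = s * ‖q‖ := by rw [hyx2, norm_neg, hsmul_norm]
    have hE2 : dy - d + s * (∑ j, w j ^ 2) ≤ ε' * (s * ‖q‖) := by
      rw [hipyx, hnyx] at hsupy
      linarith only [hsupy]
    have hcomb : L ^ 2 ≤ ⟪q, ν⟫_ℝ + s * ‖q‖ ^ 2 / (2 * dy) + ε' * ‖q‖ := by
      have hexp : s * (⟪q, ν⟫_ℝ + s * ‖q‖ ^ 2 / (2 * dy) + ε' * ‖q‖)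
          = s * ⟪q, ν⟫_ℝ + (s * ‖q‖) ^ 2 / (2 * dy) + ε' * (s * ‖q‖) := by
        field_simp
        try ring
      have hmul : s * L ^ 2 ≤ s * (⟪q, ν⟫_ℝ + s * ‖q‖ ^ 2 / (2 * dy) + ε' * ‖q‖) := by
        rw [hexp, hLsq]
        linarith only [hE1, hE2, hipsq, hdxz]
      exact le_of_mul_le_mul_left hmul hspos
    have hδ₂x : L * (B * ‖x - z‖ ^ β) ≤ L * (B * d ^ β) + ε / 4 := by
      have hd2 : dist ‖x - z‖ d < δ₂ := by
        rw [Real.dist_eq, abs_lt]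
        constructor <;> linarith only [hxznorm, hA5, hdxz, hδ₂pos]
      have h10 := hδ₂ hd2
      rw [Real.dist_eq] at h10
      have h11 := abs_lt.mp h10
      linarith only [h11.1, h11.2]
    have hT1 : ⟪q, ν⟫_ℝ ≤ L * (B * d ^ β) + ε / 4 :=
      le_trans (hkey z hzf hzU ν hνmem) hδ₂x
    have hT2 : s * ‖q‖ ^ 2 / (2 * dy) ≤ ε / 4 := by
      have h2d : d ≤ 2 * dy := by linarith only [hdyhalf]
      have h12 : s * ‖q‖ ^ 2 / (2 * dy) ≤ s * ‖q‖ ^ 2 / d := by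
        gcongr
      linarith only [h12, hsq6]
    have hT3 : ε' * ‖q‖ ≤ ε / 4 := by
      rw [hε'def, div_mul_eq_mul_div, div_le_iff₀ (by positivity)]
      have hx4 : ε / 4 * (4 * (‖q‖ + 1)) = ε * ‖q‖ + ε := by ring
      rw [hx4]
      linarith only [hε]
    linarith only [hcomb, hT1, hT2, hT3, hε]
  have hfin : L ^ 2 ≤ L * (B * d ^ β) := le_of_forall_pos_le_add main
  rw [sq] at hfin
  exact le_of_mul_le_mul_left hfin hLpos
end
end
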